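/- arXiv:1211.2912 — 8 statements merged into one kernel-verified Lean document; each statement's English description precedes it below -/
import Mathlib

section
/- For all z ∈ ℂ∖{0} with 1 − q²z ≠ 0 and 1 − q²/z ≠ 0, the R-matrix satisfies the unitarity relation R̄(z) ∘ P ∘ R̄(1/z) ∘ P = id on ℂ^n ⊗ ℂ^n, where P is the graded permutation operator defined by P(v_i ⊗ v_j) = (−1)^{[i][j]} v_j ⊗ v_i. -/
noncomputable section

/-- The `ℤ₂`-grading: `[j] = 1` for `1 ≤ j ≤ M+1` (0-based: `j.val ≤ M`), `0` otherwise. -/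
def gr (M : ℕ) {n : ℕ} (j : Fin n) : ℕ := if (j : ℕ) ≤ M then 1 else 0

/-- Matrix entries `R̄(z)_{k1,k2}^{j1,j2}` of the `U_q(ŝl(M+1|N+1))` R-matrix
(without scalar normalization); lower indices = output, upper indices = input. -/
def Rent (M N : ℕ) (q z : ℂ) (k1 k2 j1 j2 : Fin (M + N + 2)) : ℂ :=
  if k1 = j1 ∧ k2 = j2 ∧ j1 = j2 then
    (if (j1 : ℕ) ≤ M then (-1 : ℂ) else -(q ^ 2 - z) / (1 - q ^ 2 * z))
  else if k1 = j1 ∧ k2 = j2 then (1 - z) * q / (1 - q ^ 2 * z)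
  else if k1 = j2 ∧ k2 = j1 then
    (if (k1 : ℕ) < (k2 : ℕ) then
        (-1 : ℂ) ^ (gr M k1 * gr M k2) * (1 - q ^ 2) / (1 - q ^ 2 * z)
      else (-1 : ℂ) ^ (gr M k1 * gr M k2) * (1 - q ^ 2) * z / (1 - q ^ 2 * z))
  else 0

/-- The R-matrix as a matrix on `ℂ^n ⊗ ℂ^n`: row = lower (output) indices,
column = upper (input) indices. -/
def RbarM (M N : ℕ) (q z : ℂ) :
    Matrix (Fin (M + N + 2) × Fin (M + N + 2)) (Fin (M + N + 2) × Fin (M + N + 2)) ℂ :=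
  fun kl jl => Rent M N q z kl.1 kl.2 jl.1 jl.2

/-- The graded permutation operator `P(v_i ⊗ v_j) = (−1)^{[i][j]} v_j ⊗ v_i`. -/
def Pmat (M N : ℕ) :
    Matrix (Fin (M + N + 2) × Fin (M + N + 2)) (Fin (M + N + 2) × Fin (M + N + 2)) ℂ :=
  fun kl jl => if kl.1 = jl.2 ∧ kl.2 = jl.1 then (-1 : ℂ) ^ (gr M jl.1 * gr M jl.2) else 0

set_option maxHeartbeats 1000000

lemma Rent_eq_zero {M N : ℕ} {q z : ℂ} {k1 k2 j1 j2 : Fin (M + N + 2)}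
    (h : ¬(k1 = j1 ∧ k2 = j2)) (h' : ¬(k1 = j2 ∧ k2 = j1)) :
    Rent M N q z k1 k2 j1 j2 = 0 := by
  unfold Rent
  rw [if_neg (fun hh => h ⟨hh.1, hh.2.1⟩), if_neg h, if_neg h']

lemma Rent_diag_le {M N : ℕ} {q z : ℂ} {j : Fin (M + N + 2)} (hM : (j : ℕ) ≤ M) :
    Rent M N q z j j j j = -1 := by
  unfold Rent
  rw [if_pos ⟨rfl, rfl, rfl⟩, if_pos hM]

lemma Rent_diag_gt {M N : ℕ} {q z : ℂ} {j : Fin (M + N + 2)} (hM : ¬(j : ℕ) ≤ M) :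
    Rent M N q z j j j j = -(q ^ 2 - z) / (1 - q ^ 2 * z) := by
  unfold Rent
  rw [if_pos ⟨rfl, rfl, rfl⟩, if_neg hM]

lemma Rent_offdiag {M N : ℕ} {q z : ℂ} {j1 j2 : Fin (M + N + 2)} (h : j1 ≠ j2) :
    Rent M N q z j1 j2 j1 j2 = (1 - z) * q / (1 - q ^ 2 * z) := by
  unfold Rent
  rw [if_neg (fun hh => h hh.2.2), if_pos ⟨rfl, rfl⟩]

lemma Rent_swap_lt {M N : ℕ} {q z : ℂ} {k1 k2 : Fin (M + N + 2)} (h : (k1 : ℕ) < (k2 : ℕ)) :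
    Rent M N q z k1 k2 k2 k1 = (-1) ^ (gr M k1 * gr M k2) * (1 - q ^ 2) / (1 - q ^ 2 * z) := by
  have hne : k1 ≠ k2 := fun e => absurd (congrArg Fin.val e) (Nat.ne_of_lt h)
  unfold Rent
  rw [if_neg (fun hh => hne hh.1), if_neg (fun hh => hne hh.1), if_pos ⟨rfl, rfl⟩, if_pos h]

lemma Rent_swap_ge {M N : ℕ} {q z : ℂ} {k1 k2 : Fin (M + N + 2)} (hne : k1 ≠ k2)
    (h : ¬(k1 : ℕ) < (k2 : ℕ)) :
    Rent M N q z k1 k2 k2 k1 = (-1) ^ (gr M k1 * gr M k2) * (1 - q ^ 2) * z / (1 - q ^ 2 * z) := by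
  unfold Rent
  rw [if_neg (fun hh => hne hh.1), if_neg (fun hh => hne hh.1), if_pos ⟨rfl, rfl⟩, if_neg h]

lemma mul_Pmat_apply (M N : ℕ)
    (X : Matrix (Fin (M+N+2) × Fin (M+N+2)) (Fin (M+N+2) × Fin (M+N+2)) ℂ)
    (a j : Fin (M+N+2) × Fin (M+N+2)) :
    (X * Pmat M N) a j = X a (j.2, j.1) * (-1 : ℂ) ^ (gr M j.1 * gr M j.2) := by
  rw [Matrix.mul_apply, Finset.sum_eq_single (j.2, j.1)]
  · simp [Pmat]
  · rintro ⟨b1, b2⟩ _ hb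
    simp only [Pmat]
    rw [if_neg, mul_zero]
    rintro ⟨e1, e2⟩
    exact hb (by simp [Prod.ext_iff, e1, e2])
  · simp

/-- Unitarity of the R-matrix: `R̄(z) ∘ P ∘ R̄(1/z) ∘ P = id`. -/
theorem Rbar_unitarity (M N : ℕ) (hMN : M ≠ N) (q : ℂ) (z : ℂ) (hz : z ≠ 0)
    (h1 : 1 - q ^ 2 * z ≠ 0) (h2 : 1 - q ^ 2 / z ≠ 0) :
    RbarM M N q z * Pmat M N * RbarM M N q (1 / z) * Pmat M N = 1 := by
  have h2' : 1 - q ^ 2 * (1 / z) ≠ 0 := by rwa [mul_one_div]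
  have h3 : z - q ^ 2 ≠ 0 := fun h => h2' (by
    rw [show (1 : ℂ) - q ^ 2 * (1 / z) = (z - q ^ 2) / z by field_simp, h, zero_div])
  ext ⟨k1, k2⟩ ⟨j1, j2⟩
  rw [mul_Pmat_apply, Matrix.mul_apply]
  simp only [mul_Pmat_apply]
  have key : ∑ x : Fin (M + N + 2) × Fin (M + N + 2),
        RbarM M N q z (k1, k2) (x.2, x.1) * (-1) ^ (gr M x.1 * gr M x.2) *
          RbarM M N q (1 / z) x (j2, j1)
      = ∑ x ∈ ({(k2, k1), (k1, k2)} : Finset (Fin (M+N+2) × Fin (M+N+2))),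
        RbarM M N q z (k1, k2) (x.2, x.1) * (-1) ^ (gr M x.1 * gr M x.2) *
          RbarM M N q (1 / z) x (j2, j1) := by
    refine (Finset.sum_subset (Finset.subset_univ _) ?_).symm
    rintro ⟨a, b⟩ - hx
    simp only [Finset.mem_insert, Finset.mem_singleton, Prod.mk.injEq, not_or, not_and] at hx
    have hA : RbarM M N q z (k1, k2) ((a, b).2, (a, b).1) = 0 := by
      refine Rent_eq_zero ?_ ?_
      · rintro ⟨e1, e2⟩; exact hx.1 e2.symm e1.symm
      · rintro ⟨e1, e2⟩; exact hx.2 e1.symm e2.symm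
    simp [hA]
  rw [key]
  simp only [RbarM]
  by_cases hk : k1 = k2
  · -- diagonal row case
    subst hk
    rw [show ({(k1, k1), (k1, k1)} : Finset (Fin (M+N+2) × Fin (M+N+2)))
        = {(k1, k1)} from by simp, Finset.sum_singleton]
    dsimp only
    by_cases hj : j1 = k1 ∧ j2 = k1
    · rw [hj.1, hj.2, Matrix.one_apply_eq]
      by_cases hM : (k1 : ℕ) ≤ M
      · rw [Rent_diag_le hM, Rent_diag_le hM]
        simp [gr, hM]
      · rw [Rent_diag_gt hM, Rent_diag_gt hM]
        simp only [gr, hM, if_false, Nat.mul_zero, pow_zero, mul_one]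
        field_simp
        try ring
    · have hB : ∀ w : ℂ, Rent M N q w k1 k1 j2 j1 = 0 := by
        intro w
        refine Rent_eq_zero ?_ ?_
        · rintro ⟨e1, e2⟩
          exact hj ⟨e2.symm, e1.symm⟩
        · rintro ⟨e1, e2⟩
          exact hj ⟨e1.symm, e2.symm⟩
      rw [Matrix.one_apply_ne (by rintro h; exact hj ⟨(Prod.mk.injEq .. ▸ h).1.symm,
        (Prod.mk.injEq .. ▸ h).2.symm⟩)]
      simp [hB]
  · -- off-diagonal row case
    have hne : (k1 : ℕ) ≠ (k2 : ℕ) := fun h => hk (Fin.ext h)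
    have hpair : ((k2, k1) : Fin (M+N+2) × Fin (M+N+2)) ≠ (k1, k2) := by
      rintro h
      exact hk ((Prod.mk.injEq .. ▸ h).2)
    rw [Finset.sum_pair hpair]
    dsimp only
    by_cases hj1 : j1 = k1 ∧ j2 = k2
    · rw [hj1.1, hj1.2, Matrix.one_apply_eq]
      rw [Rent_offdiag hk, Rent_offdiag (Ne.symm hk)]
      by_cases hlt : (k1 : ℕ) < (k2 : ℕ)
      · rw [Rent_swap_lt hlt, Rent_swap_lt hlt]
        simp only [show gr M k2 * gr M k1 = gr M k1 * gr M k2 from Nat.mul_comm _ _]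
        rcases neg_one_pow_eq_or ℂ (gr M k1 * gr M k2) with hs | hs <;>
          rw [hs] <;> field_simp [show (1 : ℂ) - z * q ^ 2 ≠ 0 from fun h => h1 (by linear_combination h)] <;> ring
      · rw [Rent_swap_ge hk hlt, Rent_swap_ge hk hlt]
        simp only [show gr M k2 * gr M k1 = gr M k1 * gr M k2 from Nat.mul_comm _ _]
        rcases neg_one_pow_eq_or ℂ (gr M k1 * gr M k2) with hs | hs <;>
          rw [hs] <;> field_simp [show (1 : ℂ) - z * q ^ 2 ≠ 0 from fun h => h1 (by linear_combination h)] <;> ring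
    · by_cases hj2 : j1 = k2 ∧ j2 = k1
      · rw [hj2.1, hj2.2]
        rw [Matrix.one_apply_ne (by rintro h; exact hk ((Prod.mk.injEq .. ▸ h).1))]
        rw [Rent_offdiag hk, Rent_offdiag hk]
        by_cases hlt : (k1 : ℕ) < (k2 : ℕ)
        · rw [Rent_swap_lt hlt, Rent_swap_ge (Ne.symm hk) (by omega)]
          simp only [show gr M k2 * gr M k1 = gr M k1 * gr M k2 from Nat.mul_comm _ _]
          rcases neg_one_pow_eq_or ℂ (gr M k1 * gr M k2) with hs | hs <;>
            rw [hs] <;> field_simp <;> ring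
        · rw [Rent_swap_ge hk hlt, Rent_swap_lt (by omega)]
          simp only [show gr M k2 * gr M k1 = gr M k1 * gr M k2 from Nat.mul_comm _ _]
          rcases neg_one_pow_eq_or ℂ (gr M k1 * gr M k2) with hs | hs <;>
            rw [hs] <;> field_simp <;> ring
      · have hB1 : ∀ w : ℂ, Rent M N q w k2 k1 j2 j1 = 0 := by
          intro w
          refine Rent_eq_zero ?_ ?_
          · rintro ⟨e1, e2⟩; exact hj1 ⟨e2.symm, e1.symm⟩
          · rintro ⟨e1, e2⟩; exact hj2 ⟨e1.symm, e2.symm⟩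
        have hB2 : ∀ w : ℂ, Rent M N q w k1 k2 j2 j1 = 0 := by
          intro w
          refine Rent_eq_zero ?_ ?_
          · rintro ⟨e1, e2⟩; exact hj2 ⟨e2.symm, e1.symm⟩
          · rintro ⟨e1, e2⟩; exact hj1 ⟨e1.symm, e2.symm⟩
        rw [Matrix.one_apply_ne (by rintro h; exact hj1 ⟨(Prod.mk.injEq .. ▸ h).1.symm,
          (Prod.mk.injEq .. ▸ h).2.symm⟩)]
        simp [hB1, hB2]
end
end

section
/- Define the Perk–Schultz R-matrix R^{PS}(z) on ℂ^n ⊗ ℂ^n by its entries R^{PS}(z)_{k1,k2}^{j1,j2} = (−1)^{[k1][k2]} R̄(z)_{k1,k2}^{j1,j2}. Then R^{PS} satisfies the ordinary (ungraded) Yang–Baxter equation: for all z1, z2, z3 ∈ ℂ∖{0} with 1 − q²z1/z2 ≠ 0, 1 − q²z1/z3 ≠ 0 and 1 − q²z2/z3 ≠ 0, one has R^{PS}_{12}(z1/z2) ∘ R^{PS}_{13}(z1/z3) ∘ R^{PS}_{23}(z2/z3) = R^{PS}_{23}(z2/z3) ∘ R^{PS}_{13}(z1/z3) ∘ R^{PS}_{12}(z1/z2)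 as operators on (ℂ^n)^{⊗3}, where X_{ab} denotes the operator acting as X on the a-th and b-th tensor factors and as the identity on the remaining factor. -/
noncomputable section

/-- The Perk–Schultz R-matrix entries:
`R^{PS}(z)_{k1,k2}^{j1,j2} = (−1)^{[k1][k2]} R̄(z)_{k1,k2}^{j1,j2}`. -/
def RPS (M N : ℕ) (q z : ℂ) (k1 k2 j1 j2 : Fin (M + N + 2)) : ℂ :=
  (-1 : ℂ) ^ (gr M k1 * gr M k2) * Rent M N q z k1 k2 j1 j2

/-- `R^{PS}` acting on the first and second tensor factors of `(ℂ^n)^{⊗3}`. -/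
def RPS12 (M N : ℕ) (q z : ℂ) :
    Matrix (Fin (M + N + 2) × Fin (M + N + 2) × Fin (M + N + 2))
      (Fin (M + N + 2) × Fin (M + N + 2) × Fin (M + N + 2)) ℂ :=
  fun a b => RPS M N q z a.1 a.2.1 b.1 b.2.1 * (if a.2.2 = b.2.2 then 1 else 0)

/-- `R^{PS}` acting on the first and third tensor factors of `(ℂ^n)^{⊗3}`. -/
def RPS13 (M N : ℕ) (q z : ℂ) :
    Matrix (Fin (M + N + 2) × Fin (M + N + 2) × Fin (M + N + 2))
      (Fin (M + N + 2) × Fin (M + N + 2) × Fin (M + N + 2)) ℂ :=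
  fun a b => RPS M N q z a.1 a.2.2 b.1 b.2.2 * (if a.2.1 = b.2.1 then 1 else 0)

/-- `R^{PS}` acting on the second and third tensor factors of `(ℂ^n)^{⊗3}`. -/
def RPS23 (M N : ℕ) (q z : ℂ) :
    Matrix (Fin (M + N + 2) × Fin (M + N + 2) × Fin (M + N + 2))
      (Fin (M + N + 2) × Fin (M + N + 2) × Fin (M + N + 2)) ℂ :=
  fun a b => RPS M N q z a.2.1 a.2.2 b.2.1 b.2.2 * (if a.1 = b.1 then 1 else 0)

/-! ### Auxiliary scalar coefficients -/

/-- Numerator of the transmission coefficient. -/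
def Tn (M : ℕ) (q z : ℂ) (i j : ℕ) : ℂ :=
  if i = j then (if i ≤ M then 1 - z else -(q ^ 2 * (1 - z)))
  else (if i ≤ M ∧ j ≤ M then -((1 - z) * q) else (1 - z) * q)

/-- Numerator of the reflection coefficient. -/
def Sn (q z : ℂ) (i j : ℕ) : ℂ :=
  if i < j then 1 - q ^ 2 else (1 - q ^ 2) * z

/-- Transmission coefficient. -/
def Tc (M : ℕ) (q z : ℂ) (i j : ℕ) : ℂ := Tn M q z i j * (1 - q ^ 2 * z)⁻¹

/-- Reflection coefficient. -/
def Sc (q z : ℂ) (i j : ℕ) : ℂ := Sn q z i j * (1 - q ^ 2 * z)⁻¹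

set_option maxHeartbeats 4000000 in
lemma RPS_decomp (M N : ℕ) (q z : ℂ) (hz : 1 - q ^ 2 * z ≠ 0) (k1 k2 j1 j2 : Fin (M + N + 2)) :
    RPS M N q z k1 k2 j1 j2 =
      (if j1 = k1 ∧ j2 = k2 then Tc M q z k1 k2 else 0)
        + (if j1 = k2 ∧ j2 = k1 then Sc q z k1 k2 else 0) := by
  unfold RPS Rent Tc Sc Tn Sn gr
  simp only [Fin.ext_iff]
  split_ifs <;> first
    | omega
    | (field_simp; linear_combination (mul_inv_cancel₀ hz).symm)
    | (field_simp; ring)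
    | field_simp

set_option maxHeartbeats 4000000 in
lemma key_poly (M : ℕ) (q u v : ℂ)
    (i j k : ℕ) (d1 d2 d3 d4 d5 d6 : ℂ)
    (e12 : i = j → d1 = d3 ∧ d2 = d4 ∧ d5 = d6)
    (e23 : j = k → d1 = d2 ∧ d3 = d5 ∧ d4 = d6)
    (e13 : i = k → d1 = d6 ∧ d2 = d5 ∧ d3 = d4) :
    Tn M q u i j * (Tn M q (u*v) i k * (d1 * Tn M q v j k + d2 * Sn q v j k)
      + Sn q (u*v) i k * (d6 * Tn M q v j i + d5 * Sn q v j i))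
    + Sn q u i j * (Tn M q (u*v) j k * (d3 * Tn M q v i k + d4 * Sn q v i k)
      + Sn q (u*v) j k * (d5 * Tn M q v i j + d6 * Sn q v i j))
    = Tn M q v j k * (Tn M q (u*v) i k * (d1 * Tn M q u i j + d3 * Sn q u i j)
      + Sn q (u*v) i k * (d6 * Tn M q u k j + d4 * Sn q u k j))
    + Sn q v j k * (Tn M q (u*v) i j * (d2 * Tn M q u i k + d5 * Sn q u i k)
      + Sn q (u*v) i j * (d4 * Tn M q u j k + d6 * Sn q u j k)) := by
  rcases eq_or_ne i j with rfl | hij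
  · obtain ⟨h3, h4, h6⟩ := e12 rfl
    subst h3 h4 h6
    rcases eq_or_ne i k with rfl | hik
    · obtain ⟨h2, h5, -⟩ := e23 rfl
      subst h2 h5
      simp only [Tn, Sn, if_pos rfl, if_neg (lt_irrefl i)]
      split_ifs <;> first | omega | ring
    · have hki := hik.symm
      rcases hik.lt_or_gt with h3 | h3 <;>
        simp only [Tn, Sn, if_pos rfl, if_neg hik, if_neg hki, if_neg (lt_irrefl i),
          if_pos h3, if_neg (lt_asymm h3)] <;>
        split_ifs <;> first | omega | ring
  · rcases eq_or_ne j k with rfl | hjk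
    · obtain ⟨h2, h5, h6⟩ := e23 rfl
      subst h2 h5 h6
      have hji := hij.symm
      rcases hij.lt_or_gt with h1 | h1 <;>
        simp only [Tn, Sn, if_pos rfl, if_neg hij, if_neg hji, if_neg (lt_irrefl j),
          if_pos h1, if_neg (lt_asymm h1)] <;>
        split_ifs <;> first | omega | ring
    · rcases eq_or_ne i k with rfl | hik
      · obtain ⟨h6, h5, h4⟩ := e13 rfl
        subst h6 h5 h4
        have hji := hij.symm; have hkj := hjk.symm
        rcases hij.lt_or_gt with h1 | h1 <;>
          simp only [Tn, Sn, if_pos rfl, if_neg hij, if_neg hji, if_neg hjk, if_neg hkj,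
            if_neg (lt_irrefl i), if_pos h1, if_neg (lt_asymm h1)] <;>
          split_ifs <;> first | omega | ring
      · have hji := hij.symm; have hkj := hjk.symm; have hki := hik.symm
        rcases hij.lt_or_gt with h1 | h1 <;> rcases hjk.lt_or_gt with h2 | h2 <;>
          rcases hik.lt_or_gt with h3 | h3 <;>
          simp only [Tn, Sn, if_neg hij, if_neg hji, if_neg hjk, if_neg hkj, if_neg hik,
            if_neg hki, if_pos h1, if_pos h2, if_pos h3, if_neg (lt_asymm h1),
            if_neg (lt_asymm h2), if_neg (lt_asymm h3)] <;>
          split_ifs <;> first | omega | ring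

set_option maxHeartbeats 8000000 in
lemma key (M : ℕ) (q u v : ℂ)
    (i j k : ℕ) (d1 d2 d3 d4 d5 d6 : ℂ)
    (e12 : i = j → d1 = d3 ∧ d2 = d4 ∧ d5 = d6)
    (e23 : j = k → d1 = d2 ∧ d3 = d5 ∧ d4 = d6)
    (e13 : i = k → d1 = d6 ∧ d2 = d5 ∧ d3 = d4) :
    Tc M q u i j * (Tc M q (u*v) i k * (d1 * Tc M q v j k + d2 * Sc q v j k)
      + Sc q (u*v) i k * (d6 * Tc M q v j i + d5 * Sc q v j i))
    + Sc q u i j * (Tc M q (u*v) j k * (d3 * Tc M q v i k + d4 * Sc q v i k)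
      + Sc q (u*v) j k * (d5 * Tc M q v i j + d6 * Sc q v i j))
    = Tc M q v j k * (Tc M q (u*v) i k * (d1 * Tc M q u i j + d3 * Sc q u i j)
      + Sc q (u*v) i k * (d6 * Tc M q u k j + d4 * Sc q u k j))
    + Sc q v j k * (Tc M q (u*v) i j * (d2 * Tc M q u i k + d5 * Sc q u i k)
      + Sc q (u*v) i j * (d4 * Tc M q u j k + d6 * Sc q u j k)) := by
  simp only [Tc, Sc]
  linear_combination ((1 - q ^ 2 * u)⁻¹ * (1 - q ^ 2 * v)⁻¹ * (1 - q ^ 2 * (u * v))⁻¹) *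
    key_poly M q u v i j k d1 d2 d3 d4 d5 d6 e12 e23 e13

lemma sum_two {α : Type*} [Fintype α] [DecidableEq α] (x y : α) (A B : ℂ) (f : α → ℂ) :
    (∑ c : α, ((if c = x then (1 : ℂ) else 0) * A + (if c = y then (1 : ℂ) else 0) * B) * f c)
      = A * f x + B * f y := by
  simp only [add_mul, ite_mul, one_mul, zero_mul, Finset.sum_add_distrib,
    Finset.sum_ite_eq', Finset.mem_univ, if_true]

lemma RPS12_eq (M N : ℕ) (q z : ℂ) (hz : 1 - q ^ 2 * z ≠ 0)
    (a c : Fin (M + N + 2) × Fin (M + N + 2) × Fin (M + N + 2)) :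
    RPS12 M N q z a c =
      (if c = (a.1, a.2.1, a.2.2) then (1 : ℂ) else 0) * Tc M q z a.1 a.2.1
        + (if c = (a.2.1, a.1, a.2.2) then (1 : ℂ) else 0) * Sc q z a.1 a.2.1 := by
  obtain ⟨a1, a2, a3⟩ := a; obtain ⟨c1, c2, c3⟩ := c
  simp only [RPS12, RPS_decomp M N q z hz, Prod.mk.injEq, Fin.ext_iff]
  split_ifs <;> first | omega | ring

lemma RPS13_eq (M N : ℕ) (q z : ℂ) (hz : 1 - q ^ 2 * z ≠ 0)
    (a c : Fin (M + N + 2) × Fin (M + N + 2) × Fin (M + N + 2)) :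
    RPS13 M N q z a c =
      (if c = (a.1, a.2.1, a.2.2) then (1 : ℂ) else 0) * Tc M q z a.1 a.2.2
        + (if c = (a.2.2, a.2.1, a.1) then (1 : ℂ) else 0) * Sc q z a.1 a.2.2 := by
  obtain ⟨a1, a2, a3⟩ := a; obtain ⟨c1, c2, c3⟩ := c
  simp only [RPS13, RPS_decomp M N q z hz, Prod.mk.injEq, Fin.ext_iff]
  split_ifs <;> first | omega | ring

lemma RPS23_eq (M N : ℕ) (q z : ℂ) (hz : 1 - q ^ 2 * z ≠ 0)
    (a c : Fin (M + N + 2) × Fin (M + N + 2) × Fin (M + N + 2)) :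
    RPS23 M N q z a c =
      (if c = (a.1, a.2.1, a.2.2) then (1 : ℂ) else 0) * Tc M q z a.2.1 a.2.2
        + (if c = (a.1, a.2.2, a.2.1) then (1 : ℂ) else 0) * Sc q z a.2.1 a.2.2 := by
  obtain ⟨a1, a2, a3⟩ := a; obtain ⟨c1, c2, c3⟩ := c
  simp only [RPS23, RPS_decomp M N q z hz, Prod.mk.injEq, Fin.ext_iff]
  split_ifs <;> first | omega | ring

lemma mul12_apply (M N : ℕ) (q z : ℂ) (hz : 1 - q ^ 2 * z ≠ 0)
    (X : Matrix (Fin (M + N + 2) × Fin (M + N + 2) × Fin (M + N + 2))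
      (Fin (M + N + 2) × Fin (M + N + 2) × Fin (M + N + 2)) ℂ) (a b) :
    (RPS12 M N q z * X) a b =
      Tc M q z a.1 a.2.1 * X (a.1, a.2.1, a.2.2) b
        + Sc q z a.1 a.2.1 * X (a.2.1, a.1, a.2.2) b := by
  rw [Matrix.mul_apply]
  simp only [RPS12_eq M N q z hz a]
  rw [sum_two]

lemma mul13_apply (M N : ℕ) (q z : ℂ) (hz : 1 - q ^ 2 * z ≠ 0)
    (X : Matrix (Fin (M + N + 2) × Fin (M + N + 2) × Fin (M + N + 2))
      (Fin (M + N + 2) × Fin (M + N + 2) × Fin (M + N + 2)) ℂ) (a b) :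
    (RPS13 M N q z * X) a b =
      Tc M q z a.1 a.2.2 * X (a.1, a.2.1, a.2.2) b
        + Sc q z a.1 a.2.2 * X (a.2.2, a.2.1, a.1) b := by
  rw [Matrix.mul_apply]
  simp only [RPS13_eq M N q z hz a]
  rw [sum_two]

lemma mul23_apply (M N : ℕ) (q z : ℂ) (hz : 1 - q ^ 2 * z ≠ 0)
    (X : Matrix (Fin (M + N + 2) × Fin (M + N + 2) × Fin (M + N + 2))
      (Fin (M + N + 2) × Fin (M + N + 2) × Fin (M + N + 2)) ℂ) (a b) :
    (RPS23 M N q z * X) a b =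
      Tc M q z a.2.1 a.2.2 * X (a.1, a.2.1, a.2.2) b
        + Sc q z a.2.1 a.2.2 * X (a.1, a.2.2, a.2.1) b := by
  rw [Matrix.mul_apply]
  simp only [RPS23_eq M N q z hz a]
  rw [sum_two]

/-- The Perk–Schultz R-matrix satisfies the ordinary (ungraded) Yang–Baxter equation. -/
theorem PerkSchultz_YangBaxter (M N : ℕ) (hMN : M ≠ N) (q : ℂ)
    (z1 z2 z3 : ℂ) (hz1 : z1 ≠ 0) (hz2 : z2 ≠ 0) (hz3 : z3 ≠ 0)
    (h12 : 1 - q ^ 2 * (z1 / z2) ≠ 0) (h13 : 1 - q ^ 2 * (z1 / z3) ≠ 0)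
    (h23 : 1 - q ^ 2 * (z2 / z3) ≠ 0) :
    RPS12 M N q (z1 / z2) * RPS13 M N q (z1 / z3) * RPS23 M N q (z2 / z3)
      = RPS23 M N q (z2 / z3) * RPS13 M N q (z1 / z3) * RPS12 M N q (z1 / z2) := by
  have hw : z1 / z3 = z1 / z2 * (z2 / z3) := by field_simp
  rw [hw] at h13 ⊢
  rw [Matrix.mul_assoc, Matrix.mul_assoc]
  ext a b
  obtain ⟨i, j, k⟩ := a
  rw [mul12_apply M N q _ h12, mul23_apply M N q _ h23]
  simp only [mul13_apply M N q _ h13]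
  simp only [RPS23_eq M N q _ h23, RPS12_eq M N q _ h12]
  exact key M (q := q) (z1 / z2) (z2 / z3) i j k
    (if b = (i, j, k) then 1 else 0) (if b = (i, k, j) then 1 else 0)
    (if b = (j, i, k) then 1 else 0) (if b = (j, k, i) then 1 else 0)
    (if b = (k, i, j) then 1 else 0) (if b = (k, j, i) then 1 else 0)
    (fun h => by have : i = j := Fin.ext h; subst this; exact ⟨rfl, rfl, rfl⟩)
    (fun h => by have : j = k := Fin.ext h; subst this; exact ⟨rfl, rfl, rfl⟩)
    (fun h => by have : i = k := Fin.ext h; subst this; exact ⟨rfl, rfl, rfl⟩)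
end
end

section
/- The identity K-matrix K̄^{(1)}(z) = id (that is, κ_j(z) = 1 for all 1 ≤ j ≤ n) satisfies the graded boundary Yang–Baxter equation: for all q ∈ ℂ∖{0} and all z1, z2 ∈ ℂ∖{0} with 1 − q²z1z2 ≠ 0 and 1 − q²z1/z2 ≠ 0, and for all i1, i2, l1, l2 ∈ {1,…,n}, Σ_{j,k=1}^{n} R̄(z1z2)_{i1,i2}^{j,k} R̄(z1/z2)_{k,j}^{l2,l1} = Σ_{j,k=1}^{n} R̄(z1/z2)_{i1,i2}^{j,k} R̄(z1z2)_{k,j}^{l2,l1}. -/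
noncomputable section

lemma Rent_eq_zero_s6 (M N : ℕ) (q z : ℂ) (a b j k : Fin (M + N + 2))
    (h : ¬ ((a = j ∧ b = k) ∨ (a = k ∧ b = j))) : Rent M N q z a b j k = 0 := by
  unfold Rent
  split_ifs <;> tauto

lemma Rent_b (M N : ℕ) (q z : ℂ) (a b : Fin (M + N + 2)) (h : a ≠ b) :
    Rent M N q z a b a b = (1 - z) * q / (1 - q ^ 2 * z) := by
  unfold Rent
  split_ifs <;> tauto

lemma Rent_c_lt (M N : ℕ) (q z : ℂ) (a b : Fin (M + N + 2)) (h : (a : ℕ) < (b : ℕ)) :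
    Rent M N q z a b b a = (-1) ^ (gr M a * gr M b) * (1 - q ^ 2) / (1 - q ^ 2 * z) := by
  have hab : a ≠ b := fun e => absurd (congrArg Fin.val e) (Nat.ne_of_lt h)
  unfold Rent
  split_ifs <;> tauto

lemma Rent_c_gt (M N : ℕ) (q z : ℂ) (a b : Fin (M + N + 2)) (h : (b : ℕ) < (a : ℕ)) :
    Rent M N q z a b b a = (-1) ^ (gr M a * gr M b) * (1 - q ^ 2) * z / (1 - q ^ 2 * z) := by
  have hab : a ≠ b := fun e => absurd (congrArg Fin.val e).symm (Nat.ne_of_lt h)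
  unfold Rent
  split_ifs <;> first | tauto | (exfalso; omega)

lemma sum_eq_add_of_two {α : Type*} [Fintype α] [DecidableEq α] (f : α → ℂ) (a b : α)
    (hab : a ≠ b) (h0 : ∀ x, x ≠ a → x ≠ b → f x = 0) : ∑ x, f x = f a + f b := by
  rw [← Finset.sum_pair hab]
  exact (Finset.sum_subset (Finset.subset_univ _)
    (fun x _ hx => h0 x (fun h => hx (by simp [h])) (fun h => hx (by simp [h])))).symm

lemma collapse (M N : ℕ) (q w w' : ℂ) (i1 i2 l1 l2 : Fin (M + N + 2)) :
    (∑ j : Fin (M + N + 2), ∑ k : Fin (M + N + 2),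
      Rent M N q w i1 i2 j k * Rent M N q w' k j l2 l1)
    = (if i1 = i2 then Rent M N q w i1 i2 i1 i2 * Rent M N q w' i2 i1 l2 l1
       else Rent M N q w i1 i2 i1 i2 * Rent M N q w' i2 i1 l2 l1
          + Rent M N q w i1 i2 i2 i1 * Rent M N q w' i1 i2 l2 l1) := by
  have inner1 : (∑ k, Rent M N q w i1 i2 i1 k * Rent M N q w' k i1 l2 l1)
      = Rent M N q w i1 i2 i1 i2 * Rent M N q w' i2 i1 l2 l1 := by
    apply Finset.sum_eq_single_of_mem i2 (Finset.mem_univ i2)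
    intro k _ hk
    rw [Rent_eq_zero_s6 M N q w i1 i2 i1 k ?_, zero_mul]
    rintro (⟨-, h⟩ | ⟨h, h'⟩)
    · exact hk h.symm
    · exact hk (h.symm.trans h'.symm)
  by_cases h12 : i1 = i2
  · subst h12
    simp only [if_pos rfl]
    rw [← inner1]
    apply Finset.sum_eq_single_of_mem i1 (Finset.mem_univ i1)
    intro j _ hj
    apply Finset.sum_eq_zero
    intro k _
    rw [Rent_eq_zero_s6 M N q w i1 i1 j k (by tauto), zero_mul]
  · simp only [if_neg h12]
    have inner2 : (∑ k, Rent M N q w i1 i2 i2 k * Rent M N q w' k i2 l2 l1)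
        = Rent M N q w i1 i2 i2 i1 * Rent M N q w' i1 i2 l2 l1 := by
      apply Finset.sum_eq_single_of_mem i1 (Finset.mem_univ i1)
      intro k _ hk
      rw [Rent_eq_zero_s6 M N q w i1 i2 i2 k (by tauto), zero_mul]
    rw [sum_eq_add_of_two _ i1 i2 h12, inner1, inner2]
    intro j hj1 hj2
    apply Finset.sum_eq_zero
    intro k _
    rw [Rent_eq_zero_s6 M N q w i1 i2 j k (by tauto), zero_mul]

lemma key_alg (q u v ε : ℂ) (hu : 1 - q ^ 2 * u ≠ 0) (hv : 1 - q ^ 2 * v ≠ 0) :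
    (1 - u) * q / (1 - q ^ 2 * u) * (ε * (1 - q ^ 2) * v / (1 - q ^ 2 * v))
      + ε * (1 - q ^ 2) / (1 - q ^ 2 * u) * ((1 - v) * q / (1 - q ^ 2 * v))
    = (1 - v) * q / (1 - q ^ 2 * v) * (ε * (1 - q ^ 2) * u / (1 - q ^ 2 * u))
      + ε * (1 - q ^ 2) / (1 - q ^ 2 * v) * ((1 - u) * q / (1 - q ^ 2 * u)) := by
  field_simp
  ring

lemma key_alg' (q u v ε : ℂ) (hu : 1 - q ^ 2 * u ≠ 0) (hv : 1 - q ^ 2 * v ≠ 0) :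
    (1 - u) * q / (1 - q ^ 2 * u) * (ε * (1 - q ^ 2) / (1 - q ^ 2 * v))
      + ε * (1 - q ^ 2) * u / (1 - q ^ 2 * u) * ((1 - v) * q / (1 - q ^ 2 * v))
    = (1 - v) * q / (1 - q ^ 2 * v) * (ε * (1 - q ^ 2) / (1 - q ^ 2 * u))
      + ε * (1 - q ^ 2) * v / (1 - q ^ 2 * v) * ((1 - u) * q / (1 - q ^ 2 * u)) := by
  field_simp
  ring

/-- The identity K-matrix `K̄^{(1)}(z) = id` satisfies the graded boundary
Yang–Baxter equation (in components, with all `κ_j = 1`). -/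
theorem identity_Kmatrix_boundaryYangBaxter (M N : ℕ) (hMN : M ≠ N) (q : ℂ) (hq : q ≠ 0)
    (z1 z2 : ℂ) (hz1 : z1 ≠ 0) (hz2 : z2 ≠ 0)
    (ha : 1 - q ^ 2 * (z1 * z2) ≠ 0) (hb : 1 - q ^ 2 * (z1 / z2) ≠ 0)
    (i1 i2 l1 l2 : Fin (M + N + 2)) :
    (∑ j : Fin (M + N + 2), ∑ k : Fin (M + N + 2),
      Rent M N q (z1 * z2) i1 i2 j k * Rent M N q (z1 / z2) k j l2 l1)
    = ∑ j : Fin (M + N + 2), ∑ k : Fin (M + N + 2),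
      Rent M N q (z1 / z2) i1 i2 j k * Rent M N q (z1 * z2) k j l2 l1 := by
  rw [collapse, collapse]
  by_cases h12 : i1 = i2
  · subst h12
    simp only [if_pos rfl]
    by_cases hl : l2 = i1 ∧ l1 = i1
    · rw [hl.1, hl.2]; ring
    · rw [Rent_eq_zero_s6 M N q (z1 / z2) i1 i1 l2 l1 (by tauto),
        Rent_eq_zero_s6 M N q (z1 * z2) i1 i1 l2 l1 (by tauto)]
      ring
  · simp only [if_neg h12]
    by_cases hB : l1 = i1 ∧ l2 = i2
    · have h21 : i2 ≠ i1 := fun e => h12 e.symm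
      rw [hB.1, hB.2, Rent_b M N q (z1 * z2) i1 i2 h12, Rent_b M N q (z1 / z2) i1 i2 h12,
        Rent_b M N q (z1 * z2) i2 i1 h21, Rent_b M N q (z1 / z2) i2 i1 h21]
      ring
    · by_cases hC : l1 = i2 ∧ l2 = i1
      · rw [hC.1, hC.2]
        have hne : (i1 : ℕ) ≠ (i2 : ℕ) := fun e => h12 (Fin.ext e)
        rw [Rent_b M N q (z1 * z2) i1 i2 h12, Rent_b M N q (z1 / z2) i1 i2 h12]
        rcases lt_or_gt_of_ne hne with hlt | hgt
        · rw [Rent_c_gt M N q (z1 / z2) i2 i1 hlt, Rent_c_gt M N q (z1 * z2) i2 i1 hlt,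
            Rent_c_lt M N q (z1 * z2) i1 i2 hlt, Rent_c_lt M N q (z1 / z2) i1 i2 hlt,
            mul_comm (gr M i2) (gr M i1)]
          exact key_alg q (z1 * z2) (z1 / z2) _ ha hb
        · rw [Rent_c_lt M N q (z1 / z2) i2 i1 hgt, Rent_c_lt M N q (z1 * z2) i2 i1 hgt,
            Rent_c_gt M N q (z1 * z2) i1 i2 hgt, Rent_c_gt M N q (z1 / z2) i1 i2 hgt,
            mul_comm (gr M i2) (gr M i1)]
          exact key_alg' q (z1 * z2) (z1 / z2) _ ha hb
      · rw [Rent_eq_zero_s6 M N q (z1 / z2) i2 i1 l2 l1 (by tauto),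
          Rent_eq_zero_s6 M N q (z1 * z2) i2 i1 l2 l1 (by tauto),
          Rent_eq_zero_s6 M N q (z1 / z2) i1 i2 l2 l1 (by tauto),
          Rent_eq_zero_s6 M N q (z1 * z2) i1 i2 l2 l1 (by tauto)]
        ring
end
end

section
/- Ratio form of the diagonal boundary relation: fix 1 ≤ j < k ≤ n, q ∈ ℂ∖{0} with q² ≠ 1, and z1, z2 ∈ ℂ∖{0} with 1 − q²z1z2 ≠ 0 and 1 − q²z1/z2 ≠ 0. Let a_j, a_k, b_j, b_k ∈ ℂ with a_k ≠ 0 and b_k ≠ 0, and write κ_j(z1) = a_j, κ_k(z1) = a_k, κ_j(z2) = b_j, κ_k(z2) = b_k. Then the relation R̄(z1/z2)_{j,k}^{j,k}·( R̄(z1z2)_{k,j}^{j,k}·a_k b_k − R̄(z1z2)_{j,k}^{k,j}·a_j b_j ) + R̄(z1z2)_{j,k}^{j,k}·( R̄(z1/z2)_{j,k}^{k,j}·b_k a_j − R̄(z1/z2)_{k,j}^{j,k}·a_k b_j ) = 0 holds if and only if (1 − z1/z2)·(z1 z2 − (a_j/a_k)(b_j/b_k)) + (1 − z1 z2)·((a_j/a_k)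 − (z1/z2)(b_j/b_k)) = 0. -/
noncomputable section

/-- Ratio form of the diagonal boundary relation for a fixed pair `j < k`. -/
theorem pairRelation_iff_ratioForm (M N : ℕ) (hMN : M ≠ N)
    (j k : Fin (M + N + 2)) (hjk : j < k) (q : ℂ) (hq : q ≠ 0) (hq2 : q ^ 2 ≠ 1)
    (z1 z2 : ℂ) (hz1 : z1 ≠ 0) (hz2 : z2 ≠ 0)
    (ha : 1 - q ^ 2 * (z1 * z2) ≠ 0) (hb : 1 - q ^ 2 * (z1 / z2) ≠ 0)
    (aj ak bj bk : ℂ) (hak : ak ≠ 0) (hbk : bk ≠ 0) :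
    (Rent M N q (z1 / z2) j k j k *
        (Rent M N q (z1 * z2) k j j k * (ak * bk)
          - Rent M N q (z1 * z2) j k k j * (aj * bj))
      + Rent M N q (z1 * z2) j k j k *
        (Rent M N q (z1 / z2) j k k j * (bk * aj)
          - Rent M N q (z1 / z2) k j j k * (ak * bj)) = 0)
    ↔ (1 - z1 / z2) * (z1 * z2 - (aj / ak) * (bj / bk))
        + (1 - z1 * z2) * ((aj / ak) - (z1 / z2) * (bj / bk)) = 0 := by
  have hne : j ≠ k := ne_of_lt hjk
  have hne' : k ≠ j := hne.symm
  have hlt : (j : ℕ) < (k : ℕ) := hjk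
  have hnlt : ¬ ((k : ℕ) < (j : ℕ)) := not_lt.mpr hlt.le
  have hE1 : ∀ z : ℂ, Rent M N q z j k j k = (1 - z) * q / (1 - q ^ 2 * z) := by
    intro z; simp [Rent, hne]
  have hE2 : ∀ z : ℂ, Rent M N q z k j j k =
      (-1 : ℂ) ^ (gr M k * gr M j) * (1 - q ^ 2) * z / (1 - q ^ 2 * z) := by
    intro z; simp [Rent, hne, hne', hnlt]
  have hE3 : ∀ z : ℂ, Rent M N q z j k k j =
      (-1 : ℂ) ^ (gr M j * gr M k) * (1 - q ^ 2) / (1 - q ^ 2 * z) := by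
    intro z; simp [Rent, hne, hne', hlt]
  rw [hE1, hE1, hE2, hE2, hE3, hE3]
  set s : ℂ := (-1 : ℂ) ^ (gr M j * gr M k) with hs
  have hs' : (-1 : ℂ) ^ (gr M k * gr M j) = s := by rw [hs, Nat.mul_comm]
  rw [hs']
  have hsne : s ≠ 0 := pow_ne_zero _ (by norm_num)
  have hq2' : 1 - q ^ 2 ≠ 0 := sub_ne_zero.mpr (Ne.symm hq2)
  set u : ℂ := z1 * z2 with hu
  set w : ℂ := z1 / z2 with hw
  clear_value u w
  have key :
      (1 - w) * q / (1 - q ^ 2 * w) *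
          (s * (1 - q ^ 2) * u / (1 - q ^ 2 * u) * (ak * bk)
            - s * (1 - q ^ 2) / (1 - q ^ 2 * u) * (aj * bj))
        + (1 - u) * q / (1 - q ^ 2 * u) *
          (s * (1 - q ^ 2) / (1 - q ^ 2 * w) * (bk * aj)
            - s * (1 - q ^ 2) * w / (1 - q ^ 2 * w) * (ak * bj))
      = (s * q * (1 - q ^ 2) * (ak * bk)
          / ((1 - q ^ 2 * u) * (1 - q ^ 2 * w))) *
        ((1 - w) * (u - (aj / ak) * (bj / bk))
          + (1 - u) * ((aj / ak) - w * (bj / bk))) := by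
    field_simp
  rw [key, mul_eq_zero, div_eq_zero_iff]
  simp [mul_eq_zero, hsne, hq, hq2', hak, hbk, ha, hb]
end
end

section
/- Sufficiency of the one-parameter family: for every β ∈ ℂ, the function ρ(z) = z(1 − βz)/(z − β) (which equals (1 − βz)/(1 − β/z)) satisfies F(z1, z2) = 0 for all z1, z2 ∈ ℂ∖{0, β}; and the function ρ(z) = z² satisfies F(z1, z2) = 0 for all z1, z2 ∈ ℂ∖{0}. -/
noncomputable section

/-- The boundary functional equation `F(z1, z2)` governing the ratio of two
diagonal entries of a diagonal solution of the graded boundary Yang–Baxter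
equation associated with `U_q(ŝl(M+1|N+1))`. -/
def Fbd (ρ : ℂ → ℂ) (z1 z2 : ℂ) : ℂ :=
  (1 - z1 / z2) * (z1 * z2 - ρ z1 * ρ z2) + (1 - z1 * z2) * (ρ z1 - (z1 / z2) * ρ z2)

/-- Sufficiency of the one-parameter family: `ρ(z) = z(1 − βz)/(z − β)` and
`ρ(z) = z²` both solve the boundary functional equation. -/
theorem boundary_functional_equation_solutions :
    (∀ β : ℂ, ∀ z1 z2 : ℂ, z1 ≠ 0 → z1 ≠ β → z2 ≠ 0 → z2 ≠ β →
      Fbd (fun z => z * (1 - β * z) / (z - β)) z1 z2 = 0)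
    ∧ (∀ z1 z2 : ℂ, z1 ≠ 0 → z2 ≠ 0 → Fbd (fun z => z ^ 2) z1 z2 = 0) := by
  constructor
  · intro β z1 z2 h1 h1b h2 h2b
    have d1 : z1 - β ≠ 0 := sub_ne_zero.mpr h1b
    have d2 : z2 - β ≠ 0 := sub_ne_zero.mpr h2b
    simp only [Fbd]
    field_simp
    ring
  · intro z1 z2 h1 h2
    simp only [Fbd]
    field_simp
    ring
end
end

section
/- Necessity (classification of solutions of the boundary functional equation): let D ⊆ ℂ∖{0} be a set containing an open neighborhood of 1, and let ρ : D → ℂ satisfy F(z1, z2) = 0 for all z1, z2 ∈ D. Then: (a) either ρ(1) = 1, or ρ(z) = −z for all z ∈ D∖{1}; (b) if ρ(1) = 1 and ρ is differentiable at 1 with d := ρ′(1), then for every z ∈ D one has ρ(z)·(2z + d(1 − z)) = z·(2 − d(1 − z)); consequently, if d = 2 then ρ(z) = z² for all z ∈ D, and if d ≠ 2 then, with β := d/(d − 2), ρ(z) = z(1 − βz)/(z − β) for all z ∈ D with z ≠ β. -/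
noncomputable section

/-- Necessity: classification of the solutions of the boundary functional
equation on a domain `D ⊆ ℂ∖{0}` containing an open neighborhood of `1`. -/
theorem boundary_functional_equation_classification
    (D : Set ℂ) (ρ : ℂ → ℂ) (hD0 : ∀ z ∈ D, z ≠ 0) (hD1 : D ∈ nhds (1 : ℂ))
    (hF : ∀ z1 ∈ D, ∀ z2 ∈ D, Fbd ρ z1 z2 = 0) :
    (ρ 1 = 1 ∨ ∀ z ∈ D, z ≠ 1 → ρ z = -z)
    ∧ (∀ d : ℂ, ρ 1 = 1 → HasDerivAt ρ d 1 →
        (∀ z ∈ D, ρ z * (2 * z + d * (1 - z)) = z * (2 - d * (1 - z)))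
        ∧ (d = 2 → ∀ z ∈ D, ρ z = z ^ 2)
        ∧ (d ≠ 2 → ∀ z ∈ D, z ≠ d / (d - 2) →
            ρ z = z * (1 - (d / (d - 2)) * z) / (z - d / (d - 2)))) := by
  have h1D : (1 : ℂ) ∈ D := mem_of_mem_nhds hD1
  constructor
  · by_cases hρ1 : ρ 1 = 1
    · exact Or.inl hρ1
    · refine Or.inr fun z hz hz1 => ?_
      have h := hF z hz 1 h1D
      simp only [Fbd, div_one, mul_one] at h
      have hfac : (1 - z) * (1 - ρ 1) * (z + ρ z) = 0 := by linear_combination h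
      rcases mul_eq_zero.mp hfac with h' | h'
      · rcases mul_eq_zero.mp h' with h'' | h''
        · exact absurd (by linear_combination -h'') hz1
        · exact absurd (by linear_combination -h'') hρ1
      · linear_combination h'
  · intro d h1 hd
    have main : ∀ z ∈ D, ρ z * (2 * z + d * (1 - z)) = z * (2 - d * (1 - z)) := by
      intro z hz
      set G : ℂ → ℂ := fun w =>
        (w - z) * (z * w - ρ z * ρ w) + (1 - z * w) * (w * ρ z - z * ρ w) with hGdef
      have hG0 : G =ᶠ[nhds (1 : ℂ)] fun _ => 0 := by
        filter_upwards [hD1] with w hw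
        have hw0 : w ≠ 0 := hD0 w hw
        have hFzw := hF z hz w hw
        have hinv : w * w⁻¹ = 1 := mul_inv_cancel₀ hw0
        have : G w = w * Fbd ρ z w := by
          simp only [hGdef, Fbd, div_eq_mul_inv]
          linear_combination (z * (z * w - ρ z * ρ w) + (1 - z * w) * z * ρ w) * hinv
        rw [this, hFzw, mul_zero]
      have hid : HasDerivAt (fun w : ℂ => w) 1 1 := hasDerivAt_id 1
      have hA : HasDerivAt (fun w : ℂ => w - z) 1 1 := hid.sub_const z
      have hB : HasDerivAt (fun w : ℂ => z * w - ρ z * ρ w) (z * 1 - ρ z * d) 1 :=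
        (hid.const_mul z).sub (hd.const_mul (ρ z))
      have hC : HasDerivAt (fun w : ℂ => 1 - z * w) (0 - z * 1) 1 :=
        (hasDerivAt_const 1 (1 : ℂ)).sub (hid.const_mul z)
      have hE : HasDerivAt (fun w : ℂ => w * ρ z - z * ρ w) (1 * ρ z - z * d) 1 :=
        (hid.mul_const (ρ z)).sub (hd.const_mul z)
      have hGd : HasDerivAt G
          ((1 * (z * 1 - ρ z * ρ 1) + (1 - z) * (z * 1 - ρ z * d))
            + ((0 - z * 1) * (1 * ρ z - z * ρ 1) + (1 - z * 1) * (1 * ρ z - z * d))) 1 :=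
        (hA.mul hB).add (hC.mul hE)
      have hGzero : HasDerivAt G 0 1 :=
        (hasDerivAt_const (1 : ℂ) (0 : ℂ)).congr_of_eventuallyEq hG0
      have hc0 := hGd.unique hGzero
      rw [h1] at hc0
      linear_combination -hc0
    refine ⟨main, ?_, ?_⟩
    · intro hd2 z hz
      have h := main z hz
      rw [hd2] at h
      linear_combination h / 2
    · intro hd2 z hz hzβ
      have h := main z hz
      have hd2' : d - 2 ≠ 0 := sub_ne_zero.mpr hd2
      have hzβ' : z - d / (d - 2) ≠ 0 := sub_ne_zero.mpr hzβ
      rw [eq_div_iff hzβ']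
      field_simp
      linear_combination -h
end
end

section
/- Infinite product formula for the normalization factor: let M > N ≥ 0 be integers, let q ∈ ℂ with 0 < |q| < 1, set p = q^{2(M−N)}, and let z ∈ ℂ∖{0} with |q²z| < 1 and |q²/z| < 1. Then the series S(z) = Σ_{m=1}^{∞} ( (q^{(M−N−1)m} − q^{−(M−N−1)m}) / ( m·(q^{(M−N)m} − q^{−(M−N)m}) ) )·q^m·(z^m − z^{−m}) converges absolutely, and exp(−S(z)) = ( (q²z; p)_∞ · (p z^{−1}; p)_∞ ) / ( (p z; p)_∞ · (q² z^{−1}; p)_∞ ). -/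
noncomputable section

/-- The `m`-th term of the series `S(z)` defining the normalization factor
`r(z)` of the `U_q(ŝl(M+1|N+1))` R-matrix. -/
def sTerm (M N : ℕ) (q z : ℂ) (m : ℕ) : ℂ :=
  ((q ^ (((M : ℤ) - (N : ℤ) - 1) * (m : ℤ)) - q ^ (-(((M : ℤ) - (N : ℤ) - 1) * (m : ℤ)))) /
      ((m : ℂ) * (q ^ (((M : ℤ) - (N : ℤ)) * (m : ℤ)) - q ^ (-(((M : ℤ) - (N : ℤ)) * (m : ℤ)))))) *
    q ^ (m : ℕ) * (z ^ (m : ℤ) - z ^ (-(m : ℤ)))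

/-- The infinite product `(a; p)_∞ = Π_{k=0}^{∞} (1 − a p^k)`. -/
def qPoch (a p : ℂ) : ℂ := ∏' k : ℕ, (1 - a * p ^ k)

/-- exp of a summable sum of logs is the product. -/
lemma exp_tsum_log' {f : ℕ → ℂ} (hfn : ∀ n, f n ≠ 0)
    (hf : Summable fun n => Complex.log (f n)) :
    Complex.exp (∑' n, Complex.log (f n)) = ∏' n, f n := by
  exact Complex.cexp_tsum_eq_tprod hfn hf

/-- Key single-parameter lemma: absolute convergence of
`∑ a^(m+1)/((m+1)(1-p^(m+1)))` and its exponential as a `q`-Pochhammer product. -/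
lemma key_lemma {a p : ℂ} (ha : ‖a‖ < 1) (hp : ‖p‖ < 1) :
    Summable (fun m : ℕ => ‖a ^ (m + 1) / (((m : ℂ) + 1) * (1 - p ^ (m + 1)))‖)
    ∧ Complex.exp (-(∑' m : ℕ, a ^ (m + 1) / (((m : ℂ) + 1) * (1 - p ^ (m + 1)))))
      = ∏' k : ℕ, (1 - a * p ^ k) := by
  have hp0 : (0 : ℝ) ≤ ‖p‖ := norm_nonneg p
  have ha0 : (0 : ℝ) ≤ ‖a‖ := norm_nonneg a
  have hap : ∀ k : ℕ, ‖a * p ^ k‖ < 1 := by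
    intro k
    rw [norm_mul, norm_pow]
    calc ‖a‖ * ‖p‖ ^ k ≤ ‖a‖ * 1 := by
          gcongr
          exact pow_le_one₀ hp0 hp.le
      _ < 1 := by rwa [mul_one]
  set F : ℕ → ℕ → ℂ := fun m k => (a * p ^ k) ^ (m + 1) / ((m : ℂ) + 1) with hF_def
  -- summability of the double family in norm
  have hFn : Summable fun mk : ℕ × ℕ => ‖F mk.1 mk.2‖ := by
    have hga : Summable fun m : ℕ => ‖a‖ ^ (m + 1) := by
      refine ((summable_geometric_of_lt_one ha0 ha).mul_right ‖a‖).congr fun n => ?_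
      rw [← pow_succ]
    have hgp : Summable fun k : ℕ => ‖p‖ ^ k := summable_geometric_of_lt_one hp0 hp
    refine Summable.of_nonneg_of_le (fun _ => norm_nonneg _) (fun mk => ?_)
      (hga.mul_of_nonneg hgp (fun m => pow_nonneg ha0 _) (fun k => pow_nonneg hp0 _))
    obtain ⟨m, k⟩ := mk
    have h1 : ‖F m k‖ ≤ ‖a * p ^ k‖ ^ (m + 1) := by
      rw [hF_def]
      simp only
      rw [norm_div, norm_pow]
      have : (1 : ℝ) ≤ ‖(m : ℂ) + 1‖ := by
        have : ((m : ℂ) + 1) = ((m + 1 : ℕ) : ℂ) := by push_cast; ring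
        rw [this, Complex.norm_natCast]
        exact_mod_cast Nat.one_le_iff_ne_zero.mpr (Nat.succ_ne_zero m)
      calc ‖a * p ^ k‖ ^ (m + 1) / ‖(m : ℂ) + 1‖ ≤ ‖a * p ^ k‖ ^ (m + 1) / 1 := by
            gcongr
        _ = ‖a * p ^ k‖ ^ (m + 1) := div_one _
    refine h1.trans ?_
    rw [norm_mul, norm_pow, mul_pow]
    have h2 : (‖p‖ ^ k) ^ (m + 1) ≤ ‖p‖ ^ k := by
      apply pow_le_of_le_one (pow_nonneg hp0 _) (pow_le_one₀ hp0 hp.le) (Nat.succ_ne_zero m)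
    calc ‖a‖ ^ (m + 1) * (‖p‖ ^ k) ^ (m + 1) ≤ ‖a‖ ^ (m + 1) * ‖p‖ ^ k := by
          gcongr
      _ = _ := rfl
  have hF : Summable (Function.uncurry F) := by
    apply Summable.of_norm
    exact hFn
  -- row sums (geometric series in k)
  have hpm : ∀ m : ℕ, ‖p ^ (m + 1)‖ < 1 := fun m => by
    rw [norm_pow]; exact pow_lt_one₀ hp0 hp (Nat.succ_ne_zero m)
  have hrow : ∀ m : ℕ, HasSum (fun k => F m k)
      (a ^ (m + 1) / (((m : ℂ) + 1) * (1 - p ^ (m + 1)))) := by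
    intro m
    have hgeo := (hasSum_geometric_of_norm_lt_one (hpm m)).mul_left
      (a ^ (m + 1) / ((m : ℂ) + 1))
    have heq : (fun k : ℕ => a ^ (m + 1) / ((m : ℂ) + 1) * (p ^ (m + 1)) ^ k)
        = fun k => F m k := by
      funext k
      rw [hF_def]
      simp only
      rw [mul_pow, pow_right_comm]
      ring
    rw [heq] at hgeo
    convert hgeo using 1
    rfl
    rw [div_eq_mul_inv, mul_inv]
    ring
  -- column sums (Taylor series of -log)
  have hcol : ∀ k : ℕ, HasSum (fun m => F m k) (-Complex.log (1 - a * p ^ k)) := by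
    intro k
    have htay := Complex.hasSum_taylorSeries_neg_log (hap k)
    rw [← hasSum_nat_add_iff' 1] at htay
    simp only [Finset.range_one, Finset.sum_singleton, pow_zero, Nat.cast_zero, div_zero,
      sub_zero] at htay
    refine htay.congr_fun fun m => ?_
    rw [hF_def]
    simp only
    push_cast
    ring_nf
  -- summability of the norms of the single series
  have hsumnorm : Summable (fun m : ℕ =>
      ‖a ^ (m + 1) / (((m : ℂ) + 1) * (1 - p ^ (m + 1)))‖) := by
    refine Summable.of_nonneg_of_le (fun _ => norm_nonneg _) (fun m => ?_) hFn.prod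
    rw [← (hrow m).tsum_eq]
    exact norm_tsum_le_tsum_norm (hFn.prod_factor m)
  refine ⟨hsumnorm, ?_⟩
  -- swap the order of summation
  have hne : ∀ k : ℕ, (1 : ℂ) - a * p ^ k ≠ 0 := by
    intro k h
    have heq1 : a * p ^ k = 1 := by linear_combination -h
    have h2 := hap k
    rw [heq1] at h2
    simp at h2
  have hlog : Summable fun k : ℕ => Complex.log (1 - a * p ^ k) := by
    have h1 : Summable fun k : ℕ => ∑' m, F m k := by
      have := hF.prod_symm.prod
      exact this.congr fun k => rfl
    have h2 : Summable fun k : ℕ => -Complex.log (1 - a * p ^ k) :=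
      h1.congr fun k => (hcol k).tsum_eq
    simpa using h2.neg
  have hswap : ∑' m : ℕ, a ^ (m + 1) / (((m : ℂ) + 1) * (1 - p ^ (m + 1)))
      = -∑' k : ℕ, Complex.log (1 - a * p ^ k) := by
    calc ∑' m : ℕ, a ^ (m + 1) / (((m : ℂ) + 1) * (1 - p ^ (m + 1)))
        = ∑' m : ℕ, ∑' k : ℕ, F m k := by
          congr 1; exact funext fun m => ((hrow m).tsum_eq).symm
      _ = ∑' k : ℕ, ∑' m : ℕ, F m k := (hF.tsum_comm).symm
      _ = ∑' k : ℕ, -Complex.log (1 - a * p ^ k) := by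
          congr 1; exact funext fun k => (hcol k).tsum_eq
      _ = -∑' k : ℕ, Complex.log (1 - a * p ^ k) := by rw [tsum_neg]
  rw [hswap, neg_neg]
  exact exp_tsum_log' hne hlog

/-- Rewriting `sTerm` at index `m+1` as a combination of four geometric-type terms. -/
lemma sTerm_eq (M N : ℕ) (hMN : N < M) (q z : ℂ) (hq0 : q ≠ 0) (hq1 : ‖q‖ < 1)
    (hz : z ≠ 0) (m : ℕ) :
    sTerm M N q z (m + 1) =
      (q ^ 2 * z) ^ (m + 1) / (((m : ℂ) + 1) * (1 - (q ^ (2 * (M - N))) ^ (m + 1)))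
      - (q ^ (2 * (M - N)) * z) ^ (m + 1) / (((m : ℂ) + 1) * (1 - (q ^ (2 * (M - N))) ^ (m + 1)))
      - (q ^ 2 / z) ^ (m + 1) / (((m : ℂ) + 1) * (1 - (q ^ (2 * (M - N))) ^ (m + 1)))
      + (q ^ (2 * (M - N)) / z) ^ (m + 1) / (((m : ℂ) + 1) * (1 - (q ^ (2 * (M - N))) ^ (m + 1))) := by
  set d : ℕ := M - N with hd_def
  have hd1 : 1 ≤ d := by omega
  have hcast : ((d : ℤ)) = (M : ℤ) - (N : ℤ) := by omega
  have e1 : ((M : ℤ) - (N : ℤ) - 1) * ((m + 1 : ℕ) : ℤ)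
      = ((d * (m + 1) : ℕ) : ℤ) - ((m + 1 : ℕ) : ℤ) := by
    rw [← hcast]; push_cast; ring
  have e2 : ((M : ℤ) - (N : ℤ)) * ((m + 1 : ℕ) : ℤ) = ((d * (m + 1) : ℕ) : ℤ) := by
    rw [← hcast]; push_cast; ring
  rw [sTerm, e1, e2]
  simp only [zpow_neg, zpow_sub₀ hq0, zpow_natCast]
  rw [pow_mul q d (m + 1)]
  have hq2d : q ^ (2 * d) = (q ^ d) ^ 2 := by rw [← pow_mul, mul_comm]
  rw [hq2d]
  have hA : q ^ (m + 1) ≠ 0 := pow_ne_zero _ hq0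
  have hB : (q ^ d) ^ (m + 1) ≠ 0 := pow_ne_zero _ (pow_ne_zero _ hq0)
  have hC : z ^ (m + 1) ≠ 0 := pow_ne_zero _ hz
  have hn : ((m : ℂ) + 1) ≠ 0 := by
    have := Nat.cast_add_one_ne_zero (R := ℂ) m
    exact_mod_cast this
  have hB2 : ((q ^ d) ^ (m + 1)) ^ 2 ≠ 1 := by
    intro h
    have hnorm : ‖((q ^ d) ^ (m + 1)) ^ 2‖ < 1 := by
      rw [norm_pow, norm_pow, norm_pow]
      have h1 : ‖q‖ ^ ((d * (m + 1)) * 2) < 1 := by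
        apply pow_lt_one₀ (norm_nonneg q) hq1
        positivity
      calc ((‖q‖ ^ d) ^ (m + 1)) ^ 2 = ‖q‖ ^ ((d * (m + 1)) * 2) := by
            rw [← pow_mul, ← pow_mul, mul_assoc]
        _ < 1 := h1
    rw [h] at hnorm
    simp at hnorm
  have hB2' : (1 : ℂ) - ((q ^ d) ^ (m + 1)) ^ 2 ≠ 0 := by
    intro h
    exact hB2 (by linear_combination -h)
  have hBB : (q ^ d) ^ (m + 1) - ((q ^ d) ^ (m + 1))⁻¹ ≠ 0 := by
    intro h
    apply hB2'
    have h' : (q ^ d) ^ (m + 1) = ((q ^ d) ^ (m + 1))⁻¹ := by linear_combination h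
    have : (q ^ d) ^ (m + 1) * (q ^ d) ^ (m + 1) = 1 := by
      nth_rewrite 1 [h']
      exact inv_mul_cancel₀ hB
    rw [sq, this]
    ring
  simp only [mul_pow, div_pow, pow_right_comm q 2 (m + 1), pow_right_comm (q ^ d) 2 (m + 1)]
  push_cast
  generalize hGB : (q ^ d) ^ (m + 1) = B at hB hB2' hBB ⊢
  generalize hGA : q ^ (m + 1) = A at hA ⊢
  generalize hGC : z ^ (m + 1) = C at hC ⊢
  generalize hGn : ((m : ℂ) + 1) = n at hn ⊢
  have hB21 : B ^ 2 - 1 ≠ 0 := fun h => hB2' (by linear_combination -h)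
  have hfac : B - B⁻¹ = (B ^ 2 - 1) / B := by
    field_simp
  rw [← sub_div, ← sub_div, ← add_div, eq_div_iff (mul_ne_zero hn hB2'), hfac, inv_div]
  field_simp
  ring

/-- Infinite product formula for the normalization factor: for `M > N`,
the series `S(z)` converges absolutely and
`exp(−S(z)) = (q²z; p)_∞ (p/z; p)_∞ / ((pz; p)_∞ (q²/z; p)_∞)` with
`p = q^{2(M−N)}`. -/
theorem exp_neg_S_eq_infiniteProduct (M N : ℕ) (hMN : N < M) (q z : ℂ)
    (hq0 : q ≠ 0) (hq1 : ‖q‖ < 1) (hz : z ≠ 0)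
    (h1 : ‖q ^ 2 * z‖ < 1) (h2 : ‖q ^ 2 / z‖ < 1) :
    Summable (fun m : ℕ => ‖sTerm M N q z (m + 1)‖)
    ∧ Complex.exp (-(∑' m : ℕ, sTerm M N q z (m + 1)))
      = (qPoch (q ^ 2 * z) (q ^ (2 * (M - N))) * qPoch (q ^ (2 * (M - N)) / z) (q ^ (2 * (M - N))))
        / (qPoch (q ^ (2 * (M - N)) * z) (q ^ (2 * (M - N)))
            * qPoch (q ^ 2 / z) (q ^ (2 * (M - N)))) := by
  have hq1' : ‖q‖ < 1 := hq1
  have h1' : ‖q ^ 2 * z‖ < 1 := h1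
  have h2' : ‖q ^ 2 / z‖ < 1 := h2
  set p : ℂ := q ^ (2 * (M - N)) with hp_def
  have hMN2 : 2 ≤ 2 * (M - N) := by omega
  have hpow : ‖q‖ ^ (2 * (M - N)) = ‖q‖ ^ (2 * (M - N) - 2) * ‖q‖ ^ 2 := by
    rw [← pow_add]; congr 1; omega
  have hqle : ‖q‖ ^ (2 * (M - N) - 2) ≤ 1 := pow_le_one₀ (norm_nonneg q) hq1'.le
  have hp : ‖p‖ < 1 := by
    rw [hp_def, norm_pow]
    exact pow_lt_one₀ (norm_nonneg q) hq1' (by omega)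
  have ha2 : ‖p * z‖ < 1 := by
    calc ‖p * z‖ = ‖q‖ ^ (2 * (M - N) - 2) * ‖q ^ 2 * z‖ := by
          rw [norm_mul, norm_mul, hp_def, norm_pow, norm_pow, hpow]; ring
      _ ≤ 1 * ‖q ^ 2 * z‖ := by gcongr
      _ < 1 := by rw [one_mul]; exact h1'
  have ha4 : ‖p / z‖ < 1 := by
    calc ‖p / z‖ = ‖q‖ ^ (2 * (M - N) - 2) * ‖q ^ 2 / z‖ := by
          rw [norm_div, norm_div, hp_def, norm_pow, norm_pow, hpow]; ring
      _ ≤ 1 * ‖q ^ 2 / z‖ := by gcongr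
      _ < 1 := by rw [one_mul]; exact h2'
  obtain ⟨S1, E1⟩ := key_lemma (a := q ^ 2 * z) (p := p) h1' hp
  obtain ⟨S2, E2⟩ := key_lemma (a := p * z) (p := p) ha2 hp
  obtain ⟨S3, E3⟩ := key_lemma (a := q ^ 2 / z) (p := p) h2' hp
  obtain ⟨S4, E4⟩ := key_lemma (a := p / z) (p := p) ha4 hp
  set f1 : ℕ → ℂ := fun m => (q ^ 2 * z) ^ (m + 1) / (((m : ℂ) + 1) * (1 - p ^ (m + 1)))
  set f2 : ℕ → ℂ := fun m => (p * z) ^ (m + 1) / (((m : ℂ) + 1) * (1 - p ^ (m + 1)))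
  set f3 : ℕ → ℂ := fun m => (q ^ 2 / z) ^ (m + 1) / (((m : ℂ) + 1) * (1 - p ^ (m + 1)))
  set f4 : ℕ → ℂ := fun m => (p / z) ^ (m + 1) / (((m : ℂ) + 1) * (1 - p ^ (m + 1)))
  have hterm : ∀ m : ℕ, sTerm M N q z (m + 1) = f1 m - f2 m - f3 m + f4 m := fun m =>
    sTerm_eq M N hMN q z hq0 hq1' hz m
  have hs1 : Summable f1 := S1.of_norm
  have hs2 : Summable f2 := S2.of_norm
  have hs3 : Summable f3 := S3.of_norm
  have hs4 : Summable f4 := S4.of_norm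
  constructor
  · refine Summable.of_nonneg_of_le (fun m => norm_nonneg _) (fun m => ?_)
      (((S1.add S2).add S3).add S4)
    rw [hterm m]
    calc ‖f1 m - f2 m - f3 m + f4 m‖
        ≤ ‖f1 m - f2 m - f3 m‖ + ‖f4 m‖ := norm_add_le _ _
      _ ≤ (‖f1 m - f2 m‖ + ‖f3 m‖) + ‖f4 m‖ := by
          gcongr
          exact norm_sub_le _ _
      _ ≤ ((‖f1 m‖ + ‖f2 m‖) + ‖f3 m‖) + ‖f4 m‖ := by
          gcongr
          exact norm_sub_le _ _
  · have hT : ∑' m : ℕ, sTerm M N q z (m + 1)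
        = (∑' m, f1 m) - (∑' m, f2 m) - (∑' m, f3 m) + (∑' m, f4 m) := by
      rw [show (fun m : ℕ => sTerm M N q z (m + 1)) = fun m => f1 m - f2 m - f3 m + f4 m
        from funext hterm]
      rw [Summable.tsum_add ((hs1.sub hs2).sub hs3) hs4, Summable.tsum_sub (hs1.sub hs2) hs3, Summable.tsum_sub hs1 hs2]
    rw [hT, show -((∑' m, f1 m) - (∑' m, f2 m) - (∑' m, f3 m) + (∑' m, f4 m))
      = (-(∑' m, f1 m)) + (-(∑' m, f4 m)) - ((-(∑' m, f2 m)) + (-(∑' m, f3 m))) by ring]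
    rw [Complex.exp_sub, Complex.exp_add, Complex.exp_add]
    simp only [qPoch]
    rw [E1, E2, E3, E4]
end
end

section
/- Second q-deformed Cartan identity: let M, N ≥ 0 be integers with M ≠ N and set n′ = M+N+1. Then for every q ∈ ℂ∖{0} with q² ≠ 1, every integer m ≥ 1, and all 1 ≤ i, j ≤ n′: Σ_{k=1}^{n′} Σ_{l=1}^{n′} [α_{ik} m]_q · [β_{ik} m]_q · [α_{jl} m]_q · [β_{jl} m]_q · [A_{kl} m]_q = [α_{ij} m]_q · [β_{ij} m]_q · ([m]_q)² · [(M−N) m]_q. (This identity is equivalent to the commutation relation [h*_{i,m}, h*_{j,n}] = δ_{m+n,0} [α_{ij}m]_q[β_{ij}m]_q[m]_q/(m[(M−N)m]_q) for the dual bosonic generators at level c = 1.) -/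
noncomputable section

/-- The q-integer `[a]_q = (q^a − q^{−a})/(q − q^{−1})`. -/
def qint (q : ℂ) (a : ℤ) : ℂ := (q ^ a - q ^ (-a)) / (q - q⁻¹)

/-- `α_{ij}`: `min(i,j)` (1-based) if `min(i,j) ≤ M+1`, else `2(M+1) − min(i,j)`. -/
def alphaC (M : ℕ) {n' : ℕ} (i j : Fin n') : ℤ :=
  if min (i : ℕ) (j : ℕ) ≤ M then (min (i : ℕ) (j : ℕ) : ℤ) + 1
  else (2 * (M : ℤ) + 1) - (min (i : ℕ) (j : ℕ) : ℤ)

/-- `β_{ij}`: `M − N − max(i,j)` (1-based) if `max(i,j) ≤ M+1`,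
else `−M − N − 2 + max(i,j)`. -/
def betaC (M N : ℕ) {n' : ℕ} (i j : Fin n') : ℤ :=
  if max (i : ℕ) (j : ℕ) ≤ M then (M : ℤ) - (N : ℤ) - ((max (i : ℕ) (j : ℕ) : ℤ) + 1)
  else -(M : ℤ) - (N : ℤ) - 2 + ((max (i : ℕ) (j : ℕ) : ℤ) + 1)

/-- The Cartan matrix of `sl(M+1|N+1)` in the distinguished basis
(indices 1-based, here realised on `Fin (M+N+1)` with 0-based values). -/
def CartanSL (M N : ℕ) (i j : Fin (M + N + 1)) : ℤ :=
  if i = j then (if (i : ℕ) < M then 2 else if (i : ℕ) = M then 0 else -2)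
  else if (i : ℕ) + 1 = (j : ℕ) ∨ (j : ℕ) + 1 = (i : ℕ) then
    (if min (i : ℕ) (j : ℕ) < M then -1 else 1)
  else 0

/-! ### Auxiliary machinery -/

/-- `u^a - u^{-a}`, the numerator of the q-integer. -/
def Fq (u : ℂ) (a : ℤ) : ℂ := u ^ a - u ^ (-a)

lemma Fq_zero (u : ℂ) : Fq u 0 = 0 := by simp [Fq]
lemma Fm1 (u : ℂ) : Fq u (-1) = -Fq u 1 := by simp [Fq]
lemma Fm2 (u : ℂ) : Fq u (-2) = -Fq u 2 := by simp [Fq]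

section helpers
variable (u : ℂ)

lemma HH1 (hu : u ≠ 0) (a b : ℤ) :
    Fq u a * Fq u b * Fq u (-1) + Fq u (a+1) * Fq u b * Fq u 2
      + Fq u (a+2) * Fq u b * Fq u (-1) = 0 := by
  have hv : u * u⁻¹ = 1 := mul_inv_cancel₀ hu
  have h2 : (2:ℤ) = 1 + 1 := by norm_num
  simp only [Fq, h2, neg_add_rev, neg_sub, neg_neg, zpow_add₀ hu, zpow_sub₀ hu, zpow_neg,
    zpow_one]
  linear_combination (-(u ^ a)⁻¹*(u ^ b)⁻¹*u⁻¹ + (u ^ a)⁻¹*(u ^ b)⁻¹*u + (u ^ a)⁻¹*u ^ b*u⁻¹ - (u ^ a)⁻¹*u ^ b*u + u ^ a*(u ^ b)⁻¹*u⁻¹ - u ^ a*(u ^ b)⁻¹*u - u ^ a*u ^ b*u⁻¹ + u ^ a*u ^ b*u) * hv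

lemma HH2 (hu : u ≠ 0) (a b : ℤ) :
    Fq u a * Fq u b * Fq u 1 + Fq u (a+1) * Fq u b * Fq u (-2)
      + Fq u (a+2) * Fq u b * Fq u 1 = 0 := by
  have hv : u * u⁻¹ = 1 := mul_inv_cancel₀ hu
  have h2 : (2:ℤ) = 1 + 1 := by norm_num
  simp only [Fq, h2, neg_add_rev, neg_sub, neg_neg, zpow_add₀ hu, zpow_sub₀ hu, zpow_neg,
    zpow_one]
  linear_combination ((u ^ a)⁻¹*(u ^ b)⁻¹*u⁻¹ - (u ^ a)⁻¹*(u ^ b)⁻¹*u - (u ^ a)⁻¹*u ^ b*u⁻¹ + (u ^ a)⁻¹*u ^ b*u - u ^ a*(u ^ b)⁻¹*u⁻¹ + u ^ a*(u ^ b)⁻¹*u + u ^ a*u ^ b*u⁻¹ - u ^ a*u ^ b*u) * hv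

lemma HH4 (hu : u ≠ 0) (a b c : ℤ) (hc : c = a + b + 1) :
    Fq u a * Fq u b * Fq u (-1) + Fq u (a+1) * Fq u b * Fq u 2
      + Fq u (a+1) * Fq u (b-1) * Fq u (-1) = Fq u 1 ^ 2 * Fq u c := by
  subst hc
  have hv : u * u⁻¹ = 1 := mul_inv_cancel₀ hu
  have h2 : (2:ℤ) = 1 + 1 := by norm_num
  simp only [Fq, h2, neg_add_rev, neg_sub, neg_neg, zpow_add₀ hu, zpow_sub₀ hu, zpow_neg,
    zpow_one]
  linear_combination (-(u ^ a)⁻¹*(u ^ b)⁻¹*u⁻¹ + (u ^ a)⁻¹*(u ^ b)⁻¹*u + (u ^ a)⁻¹*u ^ b*u⁻¹ - (u ^ a)⁻¹*u ^ b*u + u ^ a*(u ^ b)⁻¹*u⁻¹ - u ^ a*(u ^ b)⁻¹*u - u ^ a*u ^ b*u⁻¹ + u ^ a*u ^ b*u) * hv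

lemma HH5 (hu : u ≠ 0) (b c : ℤ) (hc : c = b + 1) :
    Fq u 1 * Fq u b * Fq u 2 + Fq u 1 * Fq u (b-1) * Fq u (-1) = Fq u 1 ^ 2 * Fq u c := by
  subst hc
  have h2 : (2:ℤ) = 1 + 1 := by norm_num
  simp only [Fq, h2, neg_add_rev, neg_sub, neg_neg, zpow_add₀ hu, zpow_sub₀ hu, zpow_neg,
    zpow_one]
  ring

lemma HH6 (hu : u ≠ 0) (a b c : ℤ) (hc : c = a + b + 1) :
    Fq u a * Fq u b * Fq u (-1) + Fq u (a+1) * Fq u (b+1) * Fq u 1 = Fq u 1 ^ 2 * Fq u c := by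
  subst hc
  have hv : u * u⁻¹ = 1 := mul_inv_cancel₀ hu
  simp only [Fq, neg_add_rev, neg_sub, neg_neg, zpow_add₀ hu, zpow_sub₀ hu, zpow_neg,
    zpow_one]
  linear_combination (-(u ^ a)⁻¹*(u ^ b)⁻¹*u⁻¹ + (u ^ a)⁻¹*(u ^ b)⁻¹*u + (u ^ a)⁻¹*u ^ b*u⁻¹ - (u ^ a)⁻¹*u ^ b*u + u ^ a*(u ^ b)⁻¹*u⁻¹ - u ^ a*(u ^ b)⁻¹*u - u ^ a*u ^ b*u⁻¹ + u ^ a*u ^ b*u) * hv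

lemma HH7 (a c : ℤ) (hc : c = a) :
    Fq u a * Fq u (-1) * Fq u (-1) = Fq u 1 ^ 2 * Fq u c := by
  subst hc
  rw [Fm1]; ring

lemma HH9 (hu : u ≠ 0) (a b c : ℤ) (hc : c = a + b) :
    Fq u (a+1) * Fq u b * Fq u 1 + Fq u a * Fq u b * Fq u (-2)
      + Fq u a * Fq u (b+1) * Fq u 1 = Fq u 1 ^ 2 * Fq u c := by
  subst hc
  have h2 : (2:ℤ) = 1 + 1 := by norm_num
  simp only [Fq, h2, neg_add_rev, neg_sub, neg_neg, zpow_add₀ hu, zpow_sub₀ hu, zpow_neg,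
    zpow_one]
  ring

lemma HH10 (hu : u ≠ 0) (a c : ℤ) (hc : c = a - 1) :
    Fq u (a+1) * Fq u (-1) * Fq u 1 + Fq u a * Fq u (-1) * Fq u (-2) = Fq u 1 ^ 2 * Fq u c := by
  subst hc
  have h2 : (2:ℤ) = 1 + 1 := by norm_num
  simp only [Fq, h2, neg_add_rev, neg_sub, neg_neg, zpow_add₀ hu, zpow_sub₀ hu, zpow_neg,
    zpow_one]
  ring

end helpers

/-- ℕ-indexed version of `alphaC`'s underlying function. -/
def alN (M : ℕ) (t : ℕ) : ℤ :=
  if t ≤ M then (t : ℤ) + 1 else (2 * (M : ℤ) + 1) - (t : ℤ)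

/-- ℕ-indexed version of `betaC`'s underlying function. -/
def beN (M N : ℕ) (t : ℕ) : ℤ :=
  if t ≤ M then (M : ℤ) - (N : ℤ) - ((t : ℤ) + 1) else -(M : ℤ) - (N : ℤ) - 2 + ((t : ℤ) + 1)

/-- ℕ-indexed version of `CartanSL`. -/
def fAN (M : ℕ) (k l : ℕ) : ℤ :=
  if k = l then (if k < M then 2 else if k = M then 0 else -2)
  else if k + 1 = l ∨ l + 1 = k then (if min k l < M then -1 else 1)
  else 0

lemma sum_three (n k : ℕ) (hk : k < n) (G : ℕ → ℂ)
    (h0 : ∀ l, l + 1 < k → G l = 0) (h1 : ∀ l, k + 1 < l → G l = 0) :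
    ∑ l ∈ Finset.range n, G l
      = (if 1 ≤ k then G (k-1) else 0) + G k + (if k+1 < n then G (k+1) else 0) := by
  have hfilter : ∑ l ∈ (Finset.range n).filter (fun l => k - 1 ≤ l ∧ l ≤ k + 1), G l
      = ∑ l ∈ Finset.range n, G l := by
    apply Finset.sum_filter_of_ne
    intro x _ hGx
    by_contra hc
    have : x + 1 < k ∨ k + 1 < x := by omega
    rcases this with h | h
    · exact hGx (h0 x h)
    · exact hGx (h1 x h)
  rw [← hfilter]
  by_cases hk1 : 1 ≤ k
  · by_cases hkn : k + 1 < n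
    · rw [if_pos hk1, if_pos hkn]
      have hset : (Finset.range n).filter (fun l => k - 1 ≤ l ∧ l ≤ k + 1)
          = {k-1, k, k+1} := by
        ext x
        simp only [Finset.mem_filter, Finset.mem_range, Finset.mem_insert, Finset.mem_singleton]
        omega
      rw [hset, Finset.sum_insert (by simp only [Finset.mem_insert, Finset.mem_singleton]; omega),
        Finset.sum_insert (by simp only [Finset.mem_singleton]; omega), Finset.sum_singleton]
      ring
    · rw [if_pos hk1, if_neg hkn]
      have hset : (Finset.range n).filter (fun l => k - 1 ≤ l ∧ l ≤ k + 1)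
          = {k-1, k} := by
        ext x
        simp only [Finset.mem_filter, Finset.mem_range, Finset.mem_insert, Finset.mem_singleton]
        omega
      rw [hset, Finset.sum_insert (by simp only [Finset.mem_singleton]; omega),
        Finset.sum_singleton, add_zero]
  · have hk0 : k = 0 := by omega
    subst hk0
    rw [if_neg hk1, zero_add]
    by_cases hkn : 0 + 1 < n
    · rw [if_pos hkn]
      have hset : (Finset.range n).filter (fun l => 0 - 1 ≤ l ∧ l ≤ 0 + 1)
          = {0, 1} := by
        ext x
        simp only [Finset.mem_filter, Finset.mem_range, Finset.mem_insert, Finset.mem_singleton]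
        omega
      rw [hset, Finset.sum_insert (by simp only [Finset.mem_singleton]; omega),
        Finset.sum_singleton]
      ring
    · rw [if_neg hkn, add_zero]
      have hset : (Finset.range n).filter (fun l => 0 - 1 ≤ l ∧ l ≤ 0 + 1)
          = {0} := by
        ext x
        simp only [Finset.mem_filter, Finset.mem_range, Finset.mem_singleton]
        omega
      rw [hset, Finset.sum_singleton]
      ring

lemma key_nat (M N : ℕ) (hMN : M ≠ N) (u : ℂ) (hu : u ≠ 0) (j k : ℕ)
    (hj : j < M + N + 1) (hk : k < M + N + 1) :
    ∑ l ∈ Finset.range (M + N + 1),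
      Fq u (alN M (min j l)) * Fq u (beN M N (max j l)) * Fq u (fAN M k l)
    = if k = j then Fq u 1 ^ 2 * Fq u ((M : ℤ) - (N : ℤ)) else 0 := by
  have hst := sum_three (M+N+1) k hk
      (fun l => Fq u (alN M (min j l)) * Fq u (beN M N (max j l)) * Fq u (fAN M k l))
      (fun l hl => by
        rw [show fAN M k l = 0 from by unfold fAN; split_ifs <;> omega, Fq_zero, mul_zero])
      (fun l hl => by
        rw [show fAN M k l = 0 from by unfold fAN; split_ifs <;> omega, Fq_zero, mul_zero])
  rw [hst]
  rcases lt_trichotomy k j with hkj | rfl | hkj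
  · -- k < j
    rw [if_neg (show ¬ k = j by omega), if_pos (show k + 1 < M + N + 1 by omega)]
    rw [show max j (k-1) = j from by omega, show max j k = j from by omega,
        show max j (k+1) = j from by omega]
    rcases Nat.lt_or_ge k M with hkM | hkM
    · rcases Nat.eq_zero_or_pos k with hk0 | hk1
      · -- k = 0 < M
        rw [if_neg (show ¬ 1 ≤ k by omega)]
        rw [show fAN M k k = 2 from by unfold fAN; split_ifs <;> omega,
            show fAN M k (k+1) = -1 from by unfold fAN; split_ifs <;> omega,
            show alN M (min j k) = 1 from by unfold alN; split_ifs <;> omega,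
            show alN M (min j (k+1)) = 2 from by unfold alN; split_ifs <;> omega]
        rw [Fm1]; ring
      · -- 1 ≤ k < M
        rw [if_pos (show 1 ≤ k by omega)]
        rw [show fAN M k (k-1) = -1 from by unfold fAN; split_ifs <;> omega,
            show fAN M k k = 2 from by unfold fAN; split_ifs <;> omega,
            show fAN M k (k+1) = -1 from by unfold fAN; split_ifs <;> omega,
            show alN M (min j (k-1)) = (k:ℤ) from by unfold alN; split_ifs <;> omega,
            show alN M (min j k) = (k:ℤ)+1 from by unfold alN; split_ifs <;> omega,
            show alN M (min j (k+1)) = (k:ℤ)+2 from by unfold alN; split_ifs <;> omega]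
        linear_combination HH1 u hu (k:ℤ) (beN M N j)
    · rcases Nat.eq_or_lt_of_le hkM with hkM' | hkM'
      · -- k = M
        rcases Nat.eq_zero_or_pos k with hk0 | hk1
        · -- k = 0 = M
          rw [if_neg (show ¬ 1 ≤ k by omega)]
          rw [show fAN M k k = 0 from by unfold fAN; split_ifs <;> omega,
              show alN M (min j (k+1)) = 0 from by unfold alN; split_ifs <;> omega]
          simp [Fq_zero]
        · -- k = M ≥ 1
          rw [if_pos (show 1 ≤ k by omega)]
          rw [show fAN M k (k-1) = -1 from by unfold fAN; split_ifs <;> omega,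
              show fAN M k k = 0 from by unfold fAN; split_ifs <;> omega,
              show fAN M k (k+1) = 1 from by unfold fAN; split_ifs <;> omega,
              show alN M (min j (k-1)) = (M:ℤ) from by unfold alN; split_ifs <;> omega,
              show alN M (min j (k+1)) = (M:ℤ) from by unfold alN; split_ifs <;> omega]
          rw [Fm1, Fq_zero]
          ring
      · -- M < k < j
        have hk1 : 1 ≤ k := by omega
        rw [if_pos (show 1 ≤ k by omega)]
        rw [show fAN M k (k-1) = 1 from by unfold fAN; split_ifs <;> omega,
            show fAN M k k = -2 from by unfold fAN; split_ifs <;> omega,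
            show fAN M k (k+1) = 1 from by unfold fAN; split_ifs <;> omega,
            show alN M (min j (k-1)) = 2*(M:ℤ)-(k:ℤ)+2 from by unfold alN; split_ifs <;> omega,
            show alN M (min j k) = 2*(M:ℤ)-(k:ℤ)+1 from by unfold alN; split_ifs <;> omega,
            show alN M (min j (k+1)) = 2*(M:ℤ)-(k:ℤ) from by unfold alN; split_ifs <;> omega]
        linear_combination HH2 u hu (2*(M:ℤ)-(k:ℤ)) (beN M N j)
  · -- k = j
    rw [if_pos rfl]
    rcases Nat.lt_or_ge k M with hkM | hkM
    · rw [if_pos (show k + 1 < M + N + 1 by omega)]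
      rcases Nat.eq_zero_or_pos k with hk0 | hk1
      · -- k = 0 < M
        rw [if_neg (show ¬ 1 ≤ k by omega)]
        rw [show fAN M k k = 2 from by unfold fAN; split_ifs <;> omega,
            show fAN M k (k+1) = -1 from by unfold fAN; split_ifs <;> omega,
            show alN M (min k k) = 1 from by unfold alN; split_ifs <;> omega,
            show alN M (min k (k+1)) = 1 from by unfold alN; split_ifs <;> omega,
            show beN M N (max k k) = (M:ℤ)-(N:ℤ)-1 from by unfold beN; split_ifs <;> omega,
            show beN M N (max k (k+1)) = (M:ℤ)-(N:ℤ)-1-1 from by unfold beN; split_ifs <;> omega]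
        linear_combination HH5 u hu ((M:ℤ)-(N:ℤ)-1) ((M:ℤ)-(N:ℤ)) (by ring)
      · -- 1 ≤ k < M
        rw [if_pos (show 1 ≤ k by omega)]
        rw [show fAN M k (k-1) = -1 from by unfold fAN; split_ifs <;> omega,
            show fAN M k k = 2 from by unfold fAN; split_ifs <;> omega,
            show fAN M k (k+1) = -1 from by unfold fAN; split_ifs <;> omega,
            show alN M (min k (k-1)) = (k:ℤ) from by unfold alN; split_ifs <;> omega,
            show alN M (min k k) = (k:ℤ)+1 from by unfold alN; split_ifs <;> omega,
            show alN M (min k (k+1)) = (k:ℤ)+1 from by unfold alN; split_ifs <;> omega,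
            show beN M N (max k (k-1)) = (M:ℤ)-(N:ℤ)-1-(k:ℤ) from by unfold beN; split_ifs <;> omega,
            show beN M N (max k k) = (M:ℤ)-(N:ℤ)-1-(k:ℤ) from by unfold beN; split_ifs <;> omega,
            show beN M N (max k (k+1)) = (M:ℤ)-(N:ℤ)-1-(k:ℤ)-1 from by unfold beN; split_ifs <;> omega]
        linear_combination HH4 u hu (k:ℤ) ((M:ℤ)-(N:ℤ)-1-(k:ℤ)) ((M:ℤ)-(N:ℤ)) (by ring)
    · rcases Nat.eq_or_lt_of_le hkM with hkM' | hkM'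
      · -- k = M
        rcases Nat.eq_zero_or_pos M with hM0 | hM1
        · rcases Nat.eq_zero_or_pos N with hN0 | hN1
          · exact absurd (by omega : M = N) hMN
          · -- M = 0, N ≥ 1, k = 0
            rw [if_neg (show ¬ 1 ≤ k by omega), if_pos (show k + 1 < M + N + 1 by omega)]
            rw [show fAN M k k = 0 from by unfold fAN; split_ifs <;> omega,
                show fAN M k (k+1) = 1 from by unfold fAN; split_ifs <;> omega,
                show alN M (min k (k+1)) = 1 from by unfold alN; split_ifs <;> omega,
                show beN M N (max k (k+1)) = -(N:ℤ) from by unfold beN; split_ifs <;> omega]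
            rw [Fq_zero, show (M:ℤ)-(N:ℤ) = -(N:ℤ) from by omega]
            ring
        · rcases Nat.eq_zero_or_pos N with hN0 | hN1
          · -- M ≥ 1, N = 0, k = M = M+N
            rw [if_pos (show 1 ≤ k by omega), if_neg (show ¬ k + 1 < M + N + 1 by omega)]
            rw [show fAN M k (k-1) = -1 from by unfold fAN; split_ifs <;> omega,
                show fAN M k k = 0 from by unfold fAN; split_ifs <;> omega,
                show alN M (min k (k-1)) = (M:ℤ) from by unfold alN; split_ifs <;> omega,
                show beN M N (max k (k-1)) = -1 from by unfold beN; split_ifs <;> omega]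
            rw [Fq_zero]
            linear_combination HH7 u (M:ℤ) ((M:ℤ)-(N:ℤ)) (by omega)
          · -- M ≥ 1, N ≥ 1, k = M
            rw [if_pos (show 1 ≤ k by omega), if_pos (show k + 1 < M + N + 1 by omega)]
            rw [show fAN M k (k-1) = -1 from by unfold fAN; split_ifs <;> omega,
                show fAN M k k = 0 from by unfold fAN; split_ifs <;> omega,
                show fAN M k (k+1) = 1 from by unfold fAN; split_ifs <;> omega,
                show alN M (min k (k-1)) = (M:ℤ) from by unfold alN; split_ifs <;> omega,
                show alN M (min k (k+1)) = (M:ℤ)+1 from by unfold alN; split_ifs <;> omega,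
                show beN M N (max k (k-1)) = -(N:ℤ)-1 from by unfold beN; split_ifs <;> omega,
                show beN M N (max k (k+1)) = -(N:ℤ)-1+1 from by unfold beN; split_ifs <;> omega]
            rw [Fq_zero]
            linear_combination HH6 u hu (M:ℤ) (-(N:ℤ)-1) ((M:ℤ)-(N:ℤ)) (by ring)
      · -- M < k = j
        have hk1 : 1 ≤ k := by omega
        rw [if_pos (show 1 ≤ k by omega)]
        by_cases hkn : k + 1 < M + N + 1
        · rw [if_pos hkn]
          rw [show fAN M k (k-1) = 1 from by unfold fAN; split_ifs <;> omega,
              show fAN M k k = -2 from by unfold fAN; split_ifs <;> omega,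
              show fAN M k (k+1) = 1 from by unfold fAN; split_ifs <;> omega,
              show alN M (min k (k-1)) = 2*(M:ℤ)+1-(k:ℤ)+1 from by unfold alN; split_ifs <;> omega,
              show alN M (min k k) = 2*(M:ℤ)+1-(k:ℤ) from by unfold alN; split_ifs <;> omega,
              show alN M (min k (k+1)) = 2*(M:ℤ)+1-(k:ℤ) from by unfold alN; split_ifs <;> omega,
              show beN M N (max k (k-1)) = (k:ℤ)-(M:ℤ)-(N:ℤ)-1 from by unfold beN; split_ifs <;> omega,
              show beN M N (max k k) = (k:ℤ)-(M:ℤ)-(N:ℤ)-1 from by unfold beN; split_ifs <;> omega,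
              show beN M N (max k (k+1)) = (k:ℤ)-(M:ℤ)-(N:ℤ)-1+1 from by unfold beN; split_ifs <;> omega]
          linear_combination HH9 u hu (2*(M:ℤ)+1-(k:ℤ)) ((k:ℤ)-(M:ℤ)-(N:ℤ)-1) ((M:ℤ)-(N:ℤ)) (by ring)
        · rw [if_neg hkn]
          rw [show fAN M k (k-1) = 1 from by unfold fAN; split_ifs <;> omega,
              show fAN M k k = -2 from by unfold fAN; split_ifs <;> omega,
              show alN M (min k (k-1)) = 2*(M:ℤ)+1-(k:ℤ)+1 from by unfold alN; split_ifs <;> omega,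
              show alN M (min k k) = 2*(M:ℤ)+1-(k:ℤ) from by unfold alN; split_ifs <;> omega,
              show beN M N (max k (k-1)) = -1 from by unfold beN; split_ifs <;> omega,
              show beN M N (max k k) = -1 from by unfold beN; split_ifs <;> omega]
          linear_combination HH10 u hu (2*(M:ℤ)+1-(k:ℤ)) ((M:ℤ)-(N:ℤ)) (by omega)
  · -- k > j
    rw [if_neg (show ¬ k = j by omega)]
    have hk1 : 1 ≤ k := by omega
    rw [if_pos (show 1 ≤ k by omega)]
    rw [show min j (k-1) = j from by omega, show min j k = j from by omega,
        show min j (k+1) = j from by omega]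
    rcases Nat.lt_or_ge k M with hkM | hkM
    · -- j < k < M
      rw [if_pos (show k + 1 < M + N + 1 by omega)]
      rw [show fAN M k (k-1) = -1 from by unfold fAN; split_ifs <;> omega,
          show fAN M k k = 2 from by unfold fAN; split_ifs <;> omega,
          show fAN M k (k+1) = -1 from by unfold fAN; split_ifs <;> omega,
          show beN M N (max j (k-1)) = (M:ℤ)-(N:ℤ)-2-(k:ℤ)+2 from by unfold beN; split_ifs <;> omega,
          show beN M N (max j k) = (M:ℤ)-(N:ℤ)-2-(k:ℤ)+1 from by unfold beN; split_ifs <;> omega,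
          show beN M N (max j (k+1)) = (M:ℤ)-(N:ℤ)-2-(k:ℤ) from by unfold beN; split_ifs <;> omega]
      linear_combination HH1 u hu ((M:ℤ)-(N:ℤ)-2-(k:ℤ)) (alN M j)
    · rcases Nat.eq_or_lt_of_le hkM with hkM' | hkM'
      · -- k = M
        by_cases hkn : k + 1 < M + N + 1
        · rw [if_pos hkn]
          rw [show fAN M k (k-1) = -1 from by unfold fAN; split_ifs <;> omega,
              show fAN M k k = 0 from by unfold fAN; split_ifs <;> omega,
              show fAN M k (k+1) = 1 from by unfold fAN; split_ifs <;> omega,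
              show beN M N (max j (k-1)) = -(N:ℤ) from by unfold beN; split_ifs <;> omega,
              show beN M N (max j (k+1)) = -(N:ℤ) from by unfold beN; split_ifs <;> omega]
          rw [Fq_zero, Fm1]
          ring
        · -- k = M = M+N
          rw [if_neg hkn]
          rw [show fAN M k (k-1) = -1 from by unfold fAN; split_ifs <;> omega,
              show fAN M k k = 0 from by unfold fAN; split_ifs <;> omega,
              show beN M N (max j (k-1)) = 0 from by unfold beN; split_ifs <;> omega]
          simp [Fq_zero]
      · -- M < k
        by_cases hkn : k + 1 < M + N + 1
        · rw [if_pos hkn]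
          rw [show fAN M k (k-1) = 1 from by unfold fAN; split_ifs <;> omega,
              show fAN M k k = -2 from by unfold fAN; split_ifs <;> omega,
              show fAN M k (k+1) = 1 from by unfold fAN; split_ifs <;> omega,
              show beN M N (max j (k-1)) = (k:ℤ)-(M:ℤ)-(N:ℤ)-2 from by unfold beN; split_ifs <;> omega,
              show beN M N (max j k) = (k:ℤ)-(M:ℤ)-(N:ℤ)-2+1 from by unfold beN; split_ifs <;> omega,
              show beN M N (max j (k+1)) = (k:ℤ)-(M:ℤ)-(N:ℤ)-2+2 from by unfold beN; split_ifs <;> omega]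
          linear_combination HH2 u hu ((k:ℤ)-(M:ℤ)-(N:ℤ)-2) (alN M j)
        · -- k = M+N > M
          rw [if_neg hkn]
          rw [show fAN M k (k-1) = 1 from by unfold fAN; split_ifs <;> omega,
              show fAN M k k = -2 from by unfold fAN; split_ifs <;> omega,
              show beN M N (max j (k-1)) = -2 from by unfold beN; split_ifs <;> omega,
              show beN M N (max j k) = -1 from by unfold beN; split_ifs <;> omega]
          rw [Fm1, Fm2]
          ring

lemma key_fin (M N : ℕ) (hMN : M ≠ N) (u : ℂ) (hu : u ≠ 0) (j k : Fin (M + N + 1)) :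
    ∑ l : Fin (M + N + 1),
      Fq u (alphaC M j l) * Fq u (betaC M N j l) * Fq u (CartanSL M N k l)
    = if k = j then Fq u 1 ^ 2 * Fq u ((M : ℤ) - (N : ℤ)) else 0 := by
  have hb : ∀ l : Fin (M + N + 1),
      Fq u (alphaC M j l) * Fq u (betaC M N j l) * Fq u (CartanSL M N k l)
      = Fq u (alN M (min j.val l.val)) * Fq u (beN M N (max j.val l.val))
          * Fq u (fAN M k.val l.val) := by
    intro l
    have h1 : alphaC M j l = alN M (min j.val l.val) := by
      unfold alphaC alN
      simp only [Nat.cast_min]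
    have h2 : betaC M N j l = beN M N (max j.val l.val) := by
      unfold betaC beN
      simp only [Nat.cast_max]
    have h3 : CartanSL M N k l = fAN M k.val l.val := by
      simp only [CartanSL, fAN, Fin.ext_iff]
    rw [h1, h2, h3]
  rw [Finset.sum_congr rfl (fun l _ => hb l)]
  rw [Fin.sum_univ_eq_sum_range
    (fun l => Fq u (alN M (min j.val l)) * Fq u (beN M N (max j.val l)) * Fq u (fAN M k.val l))]
  rw [key_nat M N hMN u hu j.val k.val j.isLt k.isLt]
  simp only [Fin.ext_iff]

/-- Second q-deformed Cartan identity: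
`Σ_{k,l} [α_{ik}m]_q [β_{ik}m]_q [α_{jl}m]_q [β_{jl}m]_q [A_{kl}m]_q
  = [α_{ij}m]_q [β_{ij}m]_q ([m]_q)² [(M−N)m]_q`. -/
theorem qdeformed_second_Cartan (M N : ℕ) (hMN : M ≠ N) (q : ℂ) (hq : q ≠ 0)
    (hq2 : q ^ 2 ≠ 1) (m : ℕ) (hm : 1 ≤ m) (i j : Fin (M + N + 1)) :
    (∑ k : Fin (M + N + 1), ∑ l : Fin (M + N + 1),
      qint q (alphaC M i k * (m : ℤ)) * qint q (betaC M N i k * (m : ℤ)) *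
        qint q (alphaC M j l * (m : ℤ)) * qint q (betaC M N j l * (m : ℤ)) *
        qint q (CartanSL M N k l * (m : ℤ)))
    = qint q (alphaC M i j * (m : ℤ)) * qint q (betaC M N i j * (m : ℤ)) *
        (qint q (m : ℤ)) ^ 2 * qint q (((M : ℤ) - (N : ℤ)) * (m : ℤ)) := by
  have hc : q - q⁻¹ ≠ 0 := by
    intro h
    apply hq2
    have h' : q * (q - q⁻¹) = q ^ 2 - 1 := by
      rw [mul_sub, mul_inv_cancel₀ hq, sq]
    rw [h, mul_zero] at h'
    exact sub_eq_zero.mp h'.symm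
  have hu : q ^ (m:ℤ) ≠ 0 := zpow_ne_zero _ hq
  have hqint : ∀ a : ℤ, qint q (a * (m : ℤ)) = Fq (q ^ (m:ℤ)) a / (q - q⁻¹) := by
    intro a
    unfold qint Fq
    rw [show a * (m:ℤ) = (m:ℤ) * a from mul_comm _ _, zpow_mul,
      show -((m:ℤ) * a) = (m:ℤ) * (-a) from by ring, zpow_mul]
  have hqm : qint q (m:ℤ) = Fq (q ^ (m:ℤ)) 1 / (q - q⁻¹) := by
    have h := hqint 1
    rw [one_mul] at h
    exact h
  rw [hqm]
  simp only [hqint]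
  have hkey := key_fin M N hMN (q ^ (m:ℤ)) hu j
  calc (∑ k : Fin (M + N + 1), ∑ l : Fin (M + N + 1),
        Fq (q ^ (m:ℤ)) (alphaC M i k) / (q - q⁻¹) * (Fq (q ^ (m:ℤ)) (betaC M N i k) / (q - q⁻¹)) *
          (Fq (q ^ (m:ℤ)) (alphaC M j l) / (q - q⁻¹)) * (Fq (q ^ (m:ℤ)) (betaC M N j l) / (q - q⁻¹)) *
          (Fq (q ^ (m:ℤ)) (CartanSL M N k l) / (q - q⁻¹)))
      = (∑ k : Fin (M + N + 1), ∑ l : Fin (M + N + 1),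
          Fq (q ^ (m:ℤ)) (alphaC M i k) * Fq (q ^ (m:ℤ)) (betaC M N i k) *
            Fq (q ^ (m:ℤ)) (alphaC M j l) * Fq (q ^ (m:ℤ)) (betaC M N j l) *
            Fq (q ^ (m:ℤ)) (CartanSL M N k l)) / (q - q⁻¹) ^ 5 := by
        rw [Finset.sum_div]
        refine Finset.sum_congr rfl fun k _ => ?_
        rw [Finset.sum_div]
        refine Finset.sum_congr rfl fun l _ => ?_
        rw [div_mul_div_comm, div_mul_div_comm, div_mul_div_comm, div_mul_div_comm]
        congr 1
        ring
    _ = (Fq (q ^ (m:ℤ)) (alphaC M i j) * Fq (q ^ (m:ℤ)) (betaC M N i j) *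
          Fq (q ^ (m:ℤ)) 1 ^ 2 * Fq (q ^ (m:ℤ)) ((M:ℤ) - (N:ℤ))) / (q - q⁻¹) ^ 5 := by
        congr 1
        calc (∑ k : Fin (M + N + 1), ∑ l : Fin (M + N + 1),
              Fq (q ^ (m:ℤ)) (alphaC M i k) * Fq (q ^ (m:ℤ)) (betaC M N i k) *
                Fq (q ^ (m:ℤ)) (alphaC M j l) * Fq (q ^ (m:ℤ)) (betaC M N j l) *
                Fq (q ^ (m:ℤ)) (CartanSL M N k l))
            = ∑ k : Fin (M + N + 1),
                (Fq (q ^ (m:ℤ)) (alphaC M i k) * Fq (q ^ (m:ℤ)) (betaC M N i k)) *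
                  ∑ l : Fin (M + N + 1),
                    Fq (q ^ (m:ℤ)) (alphaC M j l) * Fq (q ^ (m:ℤ)) (betaC M N j l) *
                      Fq (q ^ (m:ℤ)) (CartanSL M N k l) := by
              refine Finset.sum_congr rfl fun k _ => ?_
              rw [Finset.mul_sum]
              exact Finset.sum_congr rfl fun l _ => by ring
          _ = ∑ k : Fin (M + N + 1),
                (Fq (q ^ (m:ℤ)) (alphaC M i k) * Fq (q ^ (m:ℤ)) (betaC M N i k)) *
                  (if k = j then Fq (q ^ (m:ℤ)) 1 ^ 2 * Fq (q ^ (m:ℤ)) ((M:ℤ) - (N:ℤ)) else 0) := by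
              exact Finset.sum_congr rfl fun k _ => by rw [hkey k]
          _ = Fq (q ^ (m:ℤ)) (alphaC M i j) * Fq (q ^ (m:ℤ)) (betaC M N i j) *
                Fq (q ^ (m:ℤ)) 1 ^ 2 * Fq (q ^ (m:ℤ)) ((M:ℤ) - (N:ℤ)) := by
              simp only [mul_ite, mul_zero]
              rw [Finset.sum_ite_eq' Finset.univ j]
              simp only [Finset.mem_univ, if_true]
              ring
    _ = Fq (q ^ (m:ℤ)) (alphaC M i j) / (q - q⁻¹) * (Fq (q ^ (m:ℤ)) (betaC M N i j) / (q - q⁻¹)) *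
          (Fq (q ^ (m:ℤ)) 1 / (q - q⁻¹)) ^ 2 * (Fq (q ^ (m:ℤ)) ((M:ℤ) - (N:ℤ)) / (q - q⁻¹)) := by
        rw [div_pow, div_mul_div_comm, div_mul_div_comm, div_mul_div_comm]
        congr 1
        ring
end
end
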